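/- arXiv:2505.04187 — 11 statements merged into one kernel-verified Lean document; each statement's English description precedes it below -/
import Mathlib

section
/- Let G be a cyclic group of order n and let (g_1, ..., g_n) be a sequence of n elements of G whose total sum is zero and which has no proper nonempty subsequence summing to zero (i.e., no nonempty zero-sum subsequence of length strictly less than n). Then all terms are equal: g_1 = g_2 = ... = g_n. -/
lemma aux_inj {G : Type*} [AddCommGroup G] {n : ℕ} (g : Fin n → G)
    (hproper : ∀ T : Finset (Fin n), T.Nonempty → T ≠ Finset.univ →
      ∑ i ∈ T, g i ≠ 0) (e : Fin n ≃ Fin n) :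
    Function.Injective (fun k : Fin n => ∑ m ∈ Finset.Iio k, g (e m)) := by
  have key : ∀ k l : Fin n, k < l →
      (∑ m ∈ Finset.Iio k, g (e m)) ≠ ∑ m ∈ Finset.Iio l, g (e m) := by
    intro k l hkl h
    have hsub : Finset.Iio k ⊆ Finset.Iio l := Finset.Iio_subset_Iio hkl.le
    have h2 := Finset.sum_sdiff (f := fun m => g (e m)) hsub
    rw [← h] at h2
    have h0 : ∑ m ∈ Finset.Iio l \ Finset.Iio k, g (e m) = 0 := by
      have := add_right_cancel (b := ∑ m ∈ Finset.Iio k, g (e m)) (a := ∑ m ∈ Finset.Iio l \ Finset.Iio k, g (e m)) (c := 0)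
      exact this (by simpa using h2)
    set T := (Finset.Iio l \ Finset.Iio k).image e with hT
    have hinj : ∀ x ∈ Finset.Iio l \ Finset.Iio k, ∀ y ∈ Finset.Iio l \ Finset.Iio k, e x = e y → x = y :=
      fun x _ y _ hxy => e.injective hxy
    have hTsum : ∑ i ∈ T, g i = 0 := by
      rw [hT, Finset.sum_image hinj]; exact h0
    have hTne : T.Nonempty := ⟨e k, Finset.mem_image.mpr ⟨k, by simp [Finset.mem_sdiff, hkl], rfl⟩⟩
    have hTuniv : T ≠ Finset.univ := by
      intro hu
      have hel : e l ∈ T := hu ▸ Finset.mem_univ _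
      obtain ⟨m, hm, hem⟩ := Finset.mem_image.mp hel
      have : m = l := e.injective hem
      subst this
      simp [Finset.mem_sdiff] at hm
    exact hproper T hTne hTuniv hTsum
  intro k l h
  rcases lt_trichotomy k l with h1 | h1 | h1
  · exact absurd h (key k l h1)
  · exact h1
  · exact absurd h.symm (key l k h1)

/-- Proposition: in a cyclic group `G` of order `n`, a zero-sum sequence of length `n`
with no proper nonempty zero-sum subsequence has all terms equal. -/
theorem stmt_0 {G : Type*} [AddCommGroup G] [Fintype G] (n : ℕ)
    (hG : IsAddCyclic G) (hcard : Fintype.card G = n)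
    (g : Fin n → G)
    (hsum : ∑ i, g i = 0)
    (hproper : ∀ T : Finset (Fin n), T.Nonempty → T ≠ Finset.univ →
      ∑ i ∈ T, g i ≠ 0) :
    ∀ i j : Fin n, g i = g j := by
  intro i j
  by_cases hij : i = j
  · rw [hij]
  have h1 : 1 < n := by
    have hnt : Nontrivial (Fin n) := ⟨⟨i, j, hij⟩⟩
    simpa using Fintype.one_lt_card (α := Fin n)
  haveI : NeZero n := ⟨by omega⟩
  have hv1 : (1 : Fin n).val = 1 := by
    rw [Fin.val_one']; exact Nat.mod_eq_of_lt h1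
  have h01 : (0 : Fin n) ≠ 1 :=
    Fin.ne_of_val_ne (by rw [Fin.val_zero, hv1]; omega)
  -- build permutation e with e 0 = i, e 1 = j
  set a : Equiv.Perm (Fin n) := Equiv.swap (0 : Fin n) i with ha
  have ha0 : a 0 = i := Equiv.swap_apply_left _ _
  set b : Equiv.Perm (Fin n) := Equiv.swap (1 : Fin n) (a.symm j) with hb
  have hb0 : b 0 = 0 := by
    apply Equiv.swap_apply_of_ne_of_ne h01
    intro h
    apply hij
    rw [← ha0, h, Equiv.apply_symm_apply]
  set e : Equiv.Perm (Fin n) := b.trans a with he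
  have he0 : e 0 = i := by rw [he]; simp only [Equiv.trans_apply, hb0, ha0]
  have he1 : e 1 = j := by
    rw [he]; simp only [Equiv.trans_apply, hb]
    rw [Equiv.swap_apply_left, Equiv.apply_symm_apply]
  set e' : Equiv.Perm (Fin n) := (Equiv.swap (0 : Fin n) 1).trans e with he'
  have he'0 : e' 0 = j := by
    rw [he']; simp only [Equiv.trans_apply, Equiv.swap_apply_left, he1]
  set s : Fin n → G := fun k => ∑ m ∈ Finset.Iio k, g (e m) with hs
  set s' : Fin n → G := fun k => ∑ m ∈ Finset.Iio k, g (e' m) with hs'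
  have hIio1 : Finset.Iio (1 : Fin n) = {0} := by
    ext m
    simp only [Finset.mem_Iio, Finset.mem_singleton, Fin.lt_def, hv1]
    constructor
    · intro h; exact Fin.ext (by rw [Fin.val_zero]; omega)
    · intro h; subst h; simp
  have hs1 : s 1 = g i := by rw [hs]; simp only [hIio1, Finset.sum_singleton, he0]
  have hs'1 : s' 1 = g j := by rw [hs']; simp only [hIio1, Finset.sum_singleton, he'0]
  have hkey : ∀ k : Fin n, k ≠ 1 → s' k = s k := by
    intro k hk
    have hkv : k.val ≠ 1 := fun h => hk (Fin.ext (by rw [hv1, h]))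
    rw [hs, hs']
    apply Finset.sum_equiv (Equiv.swap (0 : Fin n) 1)
    · intro m
      simp only [Finset.mem_Iio, Fin.lt_def]
      by_cases hm0 : m = 0
      · subst hm0
        rw [Equiv.swap_apply_left]
        rw [Fin.val_zero, hv1]
        omega
      by_cases hm1 : m = 1
      · subst hm1
        rw [Equiv.swap_apply_right]
        rw [Fin.val_zero, hv1]
        omega
      · rw [Equiv.swap_apply_of_ne_of_ne hm0 hm1]
    · intro m _
      rw [he']
      rfl
  have hsinj := aux_inj g hproper e
  have hs'inj := aux_inj g hproper e'
  have hs'surj : Function.Surjective s' := by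
    have : Function.Bijective s' :=
      (Fintype.bijective_iff_injective_and_card s').mpr ⟨hs'inj, by simp [hcard]⟩
    exact this.surjective
  obtain ⟨m, hm⟩ := hs'surj (g i)
  by_cases hm1 : m = 1
  · rw [hm1, hs'1] at hm; exact hm.symm
  · exfalso
    have : s m = s 1 := by rw [← hkey m hm1, hm, ← hs1]
    exact hm1 (hsinj this)
end

section
/- Let n ≥ 3 be an integer and let S = (g_1, ..., g_n) be a sequence of n elements of the cyclic group Z_n. If MZ(S) = n - 1, then the number of distinct elements appearing in S is exactly 2. -/
open Finset

variable {n : ℕ}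

private def MZSS (g : Fin n → ZMod n) (W : Finset (Fin n)) : Finset (ZMod n) :=
  (W.powerset.filter (fun U => U.Nonempty)).image (fun U => ∑ i ∈ U, g i)

private lemma mem_MZSS {g : Fin n → ZMod n} {W U : Finset (Fin n)} (hU : U ⊆ W)
    (hne : U.Nonempty) : (∑ i ∈ U, g i) ∈ MZSS g W := by
  apply Finset.mem_image_of_mem
  simp [Finset.mem_filter, Finset.mem_powerset, hU, hne]

private lemma exists_of_mem_MZSS {g : Fin n → ZMod n} {W : Finset (Fin n)} {v : ZMod n}
    (h : v ∈ MZSS g W) : ∃ U, U ⊆ W ∧ U.Nonempty ∧ ∑ i ∈ U, g i = v := by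
  simp only [MZSS, Finset.mem_image, Finset.mem_filter, Finset.mem_powerset] at h
  obtain ⟨U, ⟨h1, h2⟩, h3⟩ := h
  exact ⟨U, h1, h2, h3⟩

private lemma card_le_card_MZSS (hn : n ≠ 0) (g : Fin n → ZMod n) (W : Finset (Fin n)) :
    (∀ U ⊆ W, U.Nonempty → ∑ i ∈ U, g i ≠ 0) → W.card ≤ (MZSS g W).card := by
  induction W using Finset.induction_on with
  | empty => intro _; simp
  | @insert a W ha ih =>
    intro hzsf
    have hzsf' : ∀ U ⊆ W, U.Nonempty → ∑ i ∈ U, g i ≠ 0 :=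
      fun U hU => hzsf U (hU.trans (Finset.subset_insert a W))
    have hmono : MZSS g W ⊆ MZSS g (insert a W) := by
      intro v hv
      obtain ⟨U, h1, h2, h3⟩ := exists_of_mem_MZSS hv
      exact h3 ▸ mem_MZSS (h1.trans (Finset.subset_insert a W)) h2
    by_cases hss : MZSS g (insert a W) ⊆ MZSS g W
    · exfalso
      have hga : g a ∈ MZSS g W := by
        have h1 : (∑ i ∈ ({a} : Finset (Fin n)), g i) ∈ MZSS g (insert a W) :=
          mem_MZSS (by simp) ⟨a, Finset.mem_singleton_self a⟩
        have h2 := hss h1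
        simpa using h2
      have hstep : ∀ s ∈ MZSS g W, s + g a ∈ MZSS g W := by
        intro s hs
        obtain ⟨U, h1, h2, h3⟩ := exists_of_mem_MZSS hs
        have haU : a ∉ U := fun h => ha (h1 h)
        have h4 : (∑ i ∈ insert a U, g i) ∈ MZSS g (insert a W) :=
          mem_MZSS (Finset.insert_subset_insert a h1) (Finset.insert_nonempty a U)
        rw [Finset.sum_insert haU, h3] at h4
        have h5 := hss h4
        rwa [add_comm] at h5
      have hmul : ∀ k : ℕ, g a + k • g a ∈ MZSS g W := by
        intro k
        induction k with
        | zero => simpa using hga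
        | succ k ihk =>
          have h6 := hstep _ ihk
          rw [succ_nsmul, ← add_assoc]
          exact h6
      have h7 := hmul (n - 1)
      have h8 : g a + (n - 1) • g a = 0 := by
        rw [← succ_nsmul']
        have : (n - 1) + 1 = n := by omega
        rw [this, nsmul_eq_mul, ZMod.natCast_self, zero_mul]
      rw [h8] at h7
      obtain ⟨U, h1, h2, h3⟩ := exists_of_mem_MZSS h7
      exact hzsf' U h1 h2 h3
    · have hlt : MZSS g W ⊂ MZSS g (insert a W) := ⟨hmono, hss⟩
      have h1 := Finset.card_lt_card hlt
      have h2 := ih hzsf'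
      rw [Finset.card_insert_of_notMem ha]
      omega

private lemma card_MZSS_add_le [NeZero n] (g : Fin n → ZMod n) (W : Finset (Fin n))
    (V : Finset (ZMod n)) (hd : ∀ v ∈ V, v ∉ MZSS g W) : V.card + (MZSS g W).card ≤ n := by
  have hdisj : Disjoint V (MZSS g W) := Finset.disjoint_left.mpr hd
  have h := Finset.card_le_univ (V ∪ MZSS g W)
  rw [Finset.card_union_of_disjoint hdisj] at h
  simpa [Finset.card_univ, ZMod.card] using h


private lemma zero_notMem_MZSS (hn : 3 ≤ n) {g : Fin n → ZMod n}
    (hmin : ∀ U : Finset (Fin n), U.Nonempty → ∑ i ∈ U, g i = 0 → n - 1 ≤ U.card)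
    {W : Finset (Fin n)} (hWc : W.card + 2 ≤ n) : (0 : ZMod n) ∉ MZSS g W := by
  intro h
  obtain ⟨U, hUW, hUne, hUs⟩ := exists_of_mem_MZSS h
  have h1 := hmin U hUne hUs
  have h2 := Finset.card_le_card hUW
  omega

private lemma neg_notMem_MZSS (hn : 3 ≤ n) {g : Fin n → ZMod n}
    (hmin : ∀ U : Finset (Fin n), U.Nonempty → ∑ i ∈ U, g i = 0 → n - 1 ≤ U.card)
    {W : Finset (Fin n)} (hWc : W.card + 3 ≤ n) {x : Fin n} (hx : x ∉ W) :
    (-(g x)) ∉ MZSS g W := by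
  intro h
  obtain ⟨U, hUW, hUne, hUs⟩ := exists_of_mem_MZSS h
  have hxU : x ∉ U := fun hh => hx (hUW hh)
  have hs : ∑ i ∈ insert x U, g i = 0 := by
    rw [Finset.sum_insert hxU, hUs]; ring
  have h1 := hmin _ (Finset.insert_nonempty x U) hs
  rw [Finset.card_insert_of_notMem hxU] at h1
  have h2 := Finset.card_le_card hUW
  omega

private lemma four_contra (hn4 : 4 ≤ n) (g : Fin n → ZMod n)
    (hmin : ∀ U : Finset (Fin n), U.Nonempty → ∑ i ∈ U, g i = 0 → n - 1 ≤ U.card)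
    (W : Finset (Fin n)) (hWcard : W.card = n - 3)
    {v1 v2 v3 v4 : ZMod n}
    (d12 : v1 ≠ v2) (d13 : v1 ≠ v3) (d14 : v1 ≠ v4)
    (d23 : v2 ≠ v3) (d24 : v2 ≠ v4) (d34 : v3 ≠ v4)
    (h1 : v1 ∉ MZSS g W) (h2 : v2 ∉ MZSS g W) (h3 : v3 ∉ MZSS g W) (h4 : v4 ∉ MZSS g W) :
    False := by
  haveI : NeZero n := ⟨by omega⟩
  have hzsf : ∀ U ⊆ W, U.Nonempty → ∑ i ∈ U, g i ≠ 0 := by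
    intro U hU hne h0
    have ha := hmin U hne h0
    have hb := Finset.card_le_card hU
    omega
  have hgrow := card_le_card_MZSS (by omega) g W hzsf
  have hVc : ({v1, v2, v3, v4} : Finset (ZMod n)).card = 4 := by
    rw [Finset.card_insert_of_notMem (by simp [d12, d13, d14]),
        Finset.card_insert_of_notMem (by simp [d23, d24]),
        Finset.card_insert_of_notMem (by simp [d34]), Finset.card_singleton]
  have hle := card_MZSS_add_le g W {v1, v2, v3, v4} (by
    intro v hv
    simp only [Finset.mem_insert, Finset.mem_singleton] at hv
    rcases hv with rfl | rfl | rfl | rfl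
    exacts [h1, h2, h3, h4])
  rw [hVc] at hle
  omega

private lemma pair_contra (hn4 : 4 ≤ n) (g : Fin n → ZMod n)
    (hmin : ∀ U : Finset (Fin n), U.Nonempty → ∑ i ∈ U, g i = 0 → n - 1 ≤ U.card)
    (j a b : Fin n) (hja : j ≠ a) (hjb : j ≠ b) (hab : a ≠ b)
    (h0j : g j ≠ 0) (h0a : g a ≠ 0) (h0b : g b ≠ 0)
    (haj : g a ≠ g j) (hbj : g b ≠ g j) (hABne : g a ≠ g b) : False := by
  set W : Finset (Fin n) := ({j, a, b} : Finset (Fin n))ᶜ with hW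
  have h3card : ({j, a, b} : Finset (Fin n)).card = 3 := by
    rw [Finset.card_insert_of_notMem (by simp [hja, hjb]),
        Finset.card_insert_of_notMem (by simp [hab]), Finset.card_singleton]
  have hWcard : W.card = n - 3 := by
    rw [hW, Finset.card_compl, h3card, Fintype.card_fin]
  refine four_contra hn4 g hmin W hWcard
    (v1 := 0) (v2 := -(g j)) (v3 := -(g a)) (v4 := -(g b))
    ?_ ?_ ?_ ?_ ?_ ?_ ?_ ?_ ?_ ?_
  · intro h; exact h0j (by linear_combination h)
  · intro h; exact h0a (by linear_combination h)
  · intro h; exact h0b (by linear_combination h)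
  · intro h; apply haj; linear_combination h
  · intro h; apply hbj; linear_combination h
  · intro h; apply hABne; linear_combination -h
  · exact zero_notMem_MZSS (by omega) hmin (by omega)
  · exact neg_notMem_MZSS (by omega) hmin (by omega) (by simp [hW])
  · exact neg_notMem_MZSS (by omega) hmin (by omega) (by simp [hW])
  · exact neg_notMem_MZSS (by omega) hmin (by omega) (by simp [hW])


/-- If `S` is a sequence of `n ≥ 3` elements of `ℤ/nℤ` with `MZ(S) = n - 1`,
then `S` has exactly 2 distinct elements. -/
theorem stmt_1 (n : ℕ) (hn : 3 ≤ n) (g : Fin n → ZMod n)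
    (hMZ : IsLeast {m : ℕ | ∃ T : Finset (Fin n),
      T.Nonempty ∧ ∑ i ∈ T, g i = 0 ∧ T.card = m} (n - 1)) :
    (Finset.univ.image g).card = 2 := by
  classical
  haveI : NeZero n := ⟨by omega⟩
  obtain ⟨⟨T, hTne, hTsum, hTcard⟩, hlb⟩ := hMZ
  have hmin : ∀ U : Finset (Fin n), U.Nonempty → ∑ i ∈ U, g i = 0 → n - 1 ≤ U.card :=
    fun U h1 h2 => hlb ⟨U, h1, h2, rfl⟩
  have hTc : Tᶜ.card = 1 := by
    rw [Finset.card_compl, hTcard, Fintype.card_fin]; omega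
  obtain ⟨j, hj⟩ := Finset.card_eq_one.mp hTc
  have hjT : j ∉ T := by
    have h1 : j ∈ Tᶜ := by rw [hj]; exact Finset.mem_singleton_self j
    exact Finset.mem_compl.mp h1
  have hmemT : ∀ i : Fin n, i ≠ j → i ∈ T := by
    intro i hi
    by_contra h
    have h1 : i ∈ Tᶜ := Finset.mem_compl.mpr h
    rw [hj, Finset.mem_singleton] at h1
    exact hi h1
  have hne0 : ∀ i : Fin n, g i ≠ 0 := by
    intro i h
    have h1 := hmin {i} ⟨i, Finset.mem_singleton_self i⟩ (by simp [h])
    rw [Finset.card_singleton] at h1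
    omega
  have hsumU : ∑ i, g i = g j := by
    have h1 := Finset.sum_compl_add_sum T g
    rw [hj, hTsum, Finset.sum_singleton] at h1
    linear_combination -h1
  -- Claim C: at most one element of T differs from g j
  have claimC : ∀ a ∈ T, ∀ b ∈ T, a ≠ b → g a = g j ∨ g b = g j := by
    intro a ha b hb hab
    by_contra hcon
    push_neg at hcon
    obtain ⟨hAH, hBH⟩ := hcon
    have hja : j ≠ a := fun h => hjT (h ▸ ha)
    have hjb : j ≠ b := fun h => hjT (h ▸ hb)
    by_cases hn4 : 4 ≤ n
    · by_cases hAB : g a = g b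
      · by_cases hAnH : g a = -(g j)
        · by_cases h3 : g j + g j + g j = 0
          · -- {a,b}ᶜ is a zero-sum set of size n - 2 : contradiction
            have hVsum : ∑ i ∈ ({a, b} : Finset (Fin n))ᶜ, g i = 0 := by
              have h1 := Finset.sum_compl_add_sum ({a, b} : Finset (Fin n)) g
              rw [Finset.sum_pair hab, hsumU] at h1
              have hb' : g b = -(g j) := hAB ▸ hAnH
              linear_combination h1 - hAnH - hb' + h3
            have hVne : (({a, b} : Finset (Fin n))ᶜ).Nonempty :=
              ⟨j, by simp [hja, hjb]⟩
            have h1 := hmin _ hVne hVsum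
            have h2 : (({a, b} : Finset (Fin n))ᶜ).card = n - 2 := by
              rw [Finset.card_compl, Finset.card_pair hab, Fintype.card_fin]
            omega
          · -- pick c outside {j,a,b}
            have hWne : (({j, a, b} : Finset (Fin n))ᶜ).Nonempty := by
              rw [← Finset.card_pos, Finset.card_compl, Fintype.card_fin]
              have h1 : ({j, a, b} : Finset (Fin n)).card = 3 := by
                rw [Finset.card_insert_of_notMem (by simp [hja, hjb]),
                    Finset.card_insert_of_notMem (by simp [hab]), Finset.card_singleton]
              omega
            obtain ⟨c, hc⟩ := hWne
            simp only [Finset.mem_compl, Finset.mem_insert, Finset.mem_singleton] at hc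
            push_neg at hc
            obtain ⟨hcj, hca, hcb⟩ := hc
            have hcH : g c ≠ g j := by
              intro h
              have hs : ∑ i ∈ ({c, a} : Finset (Fin n)), g i = 0 := by
                rw [Finset.sum_pair hca, h, hAnH]; ring
              have h1 := hmin _ ⟨c, by simp⟩ hs
              rw [Finset.card_pair hca] at h1
              omega
            have hcmH : g c ≠ -(g j) := by
              intro h
              have hs : ∑ i ∈ ({c, j} : Finset (Fin n)), g i = 0 := by
                rw [Finset.sum_pair hcj, h]; ring
              have h1 := hmin _ ⟨c, by simp⟩ hs
              rw [Finset.card_pair hcj] at h1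
              omega
            exact pair_contra hn4 g hmin j a c hja (fun h => hcj h.symm)
              (fun h => hca h.symm) (hne0 j) (hne0 a) (hne0 c) hAH hcH
              (by rw [hAnH]; exact fun h => hcmH h.symm)
        · -- g a ≠ -(g j): four excluded values 0, -gj, -ga, -(ga+gj)
          set W : Finset (Fin n) := ({j, a, b} : Finset (Fin n))ᶜ with hW
          have h3card : ({j, a, b} : Finset (Fin n)).card = 3 := by
            rw [Finset.card_insert_of_notMem (by simp [hja, hjb]),
                Finset.card_insert_of_notMem (by simp [hab]), Finset.card_singleton]
          have hWcard : W.card = n - 3 := by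
            rw [hW, Finset.card_compl, h3card, Fintype.card_fin]
          have hWsum : ∑ i ∈ W, g i = -(g a + g b) := by
            have h1 := Finset.sum_compl_add_sum ({j, a, b} : Finset (Fin n)) g
            rw [Finset.sum_insert (by simp [hja, hjb]), Finset.sum_pair hab, hsumU] at h1
            linear_combination h1
          have hexcl : -(g a + g j) ∉ MZSS g W := by
            intro h
            obtain ⟨U, hUW, hUne, hUs⟩ := exists_of_mem_MZSS h
            have hmemU : ∀ x ∈ U, x ≠ j ∧ x ≠ a := by
              intro x hx
              have h1 := hUW hx
              rw [hW, Finset.mem_compl] at h1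
              simp only [Finset.mem_insert, Finset.mem_singleton] at h1
              push_neg at h1
              exact ⟨h1.1, h1.2.1⟩
            have haU : a ∉ U := fun hh => (hmemU a hh).2 rfl
            have hjU : j ∉ U := fun hh => (hmemU j hh).1 rfl
            have hjaU : j ∉ insert a U := by
              simp only [Finset.mem_insert]
              push_neg
              exact ⟨hja, hjU⟩
            have hins : ∑ i ∈ insert j (insert a U), g i = 0 := by
              rw [Finset.sum_insert hjaU, Finset.sum_insert haU, hUs]; ring
            have hminr := hmin _ (Finset.insert_nonempty _ _) hins
            have hcard : (insert j (insert a U)).card = U.card + 2 := by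
              rw [Finset.card_insert_of_notMem hjaU, Finset.card_insert_of_notMem haU]
            have hUle := Finset.card_le_card hUW
            have hUcard : W.card ≤ U.card := by omega
            have hUW' : U = W := Finset.eq_of_subset_of_card_le hUW hUcard
            rw [hUW', hWsum] at hUs
            exact hBH (by linear_combination -hUs)
          refine four_contra hn4 g hmin W hWcard
            (v1 := 0) (v2 := -(g j)) (v3 := -(g a)) (v4 := -(g a + g j))
            ?_ ?_ ?_ ?_ ?_ ?_ ?_ ?_ ?_ ?_
          · intro h; exact hne0 j (by linear_combination h)
          · intro h; exact hne0 a (by linear_combination h)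
          · intro h; apply hAnH; linear_combination h
          · intro h; apply hAH; linear_combination h
          · intro h; exact hne0 a (by linear_combination h)
          · intro h; exact hne0 j (by linear_combination h)
          · exact zero_notMem_MZSS (by omega) hmin (by omega)
          · exact neg_notMem_MZSS (by omega) hmin (by omega) (by simp [hW])
          · exact neg_notMem_MZSS (by omega) hmin (by omega) (by simp [hW])
          · exact hexcl
      · exact pair_contra hn4 g hmin j a b hja hjb hab (hne0 j) (hne0 a) (hne0 b)
          hAH hBH hAB
    · -- n = 3
      have hn3 : n = 3 := by omega
      have hTab : ({a, b} : Finset (Fin n)) = T := by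
        apply Finset.eq_of_subset_of_card_le
        · intro x hx
          rcases Finset.mem_insert.mp hx with rfl | hx
          · exact ha
          · rw [Finset.mem_singleton] at hx; exact hx ▸ hb
        · rw [hTcard, Finset.card_pair hab]; omega
      have hsum2 : g a + g b = 0 := by
        rw [← hTsum, ← hTab, Finset.sum_pair hab]
      have h3cast : ((3 : ℕ) : ZMod n) = 0 := by
        rw [← hn3]; exact ZMod.natCast_self n
      have h3A : g a + g a + g a = 0 := by
        have h1 : ((3 : ℕ) : ZMod n) * g a = 0 := by rw [h3cast, zero_mul]
        push_cast at h1
        linear_combination h1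
      have hABne : g a ≠ g b := by
        intro h
        exact hne0 a (by linear_combination h3A - hsum2 - h)
      have d1 : (0 : ZMod n) ≠ g j := Ne.symm (hne0 j)
      have d2 : (0 : ZMod n) ≠ g a := Ne.symm (hne0 a)
      have d3 : (0 : ZMod n) ≠ g b := Ne.symm (hne0 b)
      have d4 : g j ≠ g a := Ne.symm hAH
      have d5 : g j ≠ g b := Ne.symm hBH
      have hc4 : ({0, g j, g a, g b} : Finset (ZMod n)).card = 4 := by
        rw [Finset.card_insert_of_notMem (by simp [d1, d2, d3]),
            Finset.card_insert_of_notMem (by simp [d4, d5]),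
            Finset.card_insert_of_notMem (by simp [hABne]), Finset.card_singleton]
      have hle := Finset.card_le_univ ({0, g j, g a, g b} : Finset (ZMod n))
      rw [hc4, ZMod.card] at hle
      omega
  -- Final assembly
  set P := T.filter (fun i => g i ≠ g j) with hP
  have hPcard : P.card ≤ 1 := by
    rw [Finset.card_le_one]
    intro x hx y hy
    rw [hP, Finset.mem_filter] at hx hy
    by_contra hxy
    rcases claimC x hx.1 y hy.1 hxy with h | h
    · exact hx.2 h
    · exact hy.2 h
  have hcast1 : ((n - 1 : ℕ) : ZMod n) = -1 := by
    rw [Nat.cast_sub (by omega : 1 ≤ n), Nat.cast_one, ZMod.natCast_self, zero_sub]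
  have hcast2 : ((n - 2 : ℕ) : ZMod n) = -2 := by
    rw [Nat.cast_sub (by omega : 2 ≤ n), ZMod.natCast_self, zero_sub]
    norm_num
  rcases Finset.eq_empty_or_nonempty P with hPe | hPne
  · exfalso
    have hallH : ∀ i ∈ T, g i = g j := by
      intro i hi
      by_contra h
      have h1 : i ∈ P := by rw [hP, Finset.mem_filter]; exact ⟨hi, h⟩
      rw [hPe] at h1
      exact absurd h1 (Finset.notMem_empty i)
    have hs : ∑ i ∈ T, g i = (n - 1 : ℕ) • g j := by
      rw [Finset.sum_congr rfl hallH, Finset.sum_const, hTcard]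
    rw [hTsum, nsmul_eq_mul, hcast1] at hs
    exact hne0 j (by linear_combination hs)
  · have hP1 : P.card = 1 := le_antisymm hPcard (Finset.card_pos.mpr hPne)
    obtain ⟨a₀, hPa⟩ := Finset.card_eq_one.mp hP1
    have ha₀ : a₀ ∈ P := by rw [hPa]; exact Finset.mem_singleton_self a₀
    rw [hP, Finset.mem_filter] at ha₀
    obtain ⟨ha₀T, ha₀H⟩ := ha₀
    have hothers : ∀ i ∈ T, i ≠ a₀ → g i = g j := by
      intro i hi hia
      by_contra h
      have h1 : i ∈ P := by rw [hP, Finset.mem_filter]; exact ⟨hi, h⟩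
      rw [hPa, Finset.mem_singleton] at h1
      exact hia h1
    have herase : ∑ i ∈ T.erase a₀, g i = (n - 2 : ℕ) • g j := by
      rw [Finset.sum_congr rfl (fun i hi => hothers i (Finset.mem_of_mem_erase hi)
        (Finset.ne_of_mem_erase hi)), Finset.sum_const, Finset.card_erase_of_mem ha₀T,
        hTcard]
      congr 1
    have hadd := Finset.add_sum_erase T g ha₀T
    rw [herase, hTsum, nsmul_eq_mul, hcast2] at hadd
    -- hadd : g a₀ + (-2) * g j = 0
    have hga0 : g a₀ = g j + g j := by linear_combination hadd
    have himg : Finset.univ.image g = {g j, g a₀} := by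
      apply Finset.Subset.antisymm
      · intro v hv
        obtain ⟨i, _, rfl⟩ := Finset.mem_image.mp hv
        by_cases hij : i = j
        · subst hij; exact Finset.mem_insert_self _ _
        · by_cases hia : i = a₀
          · subst hia; simp
          · rw [hothers i (hmemT i hij) hia]
            exact Finset.mem_insert_self _ _
      · intro v hv
        rcases Finset.mem_insert.mp hv with rfl | hv
        · exact Finset.mem_image.mpr ⟨j, Finset.mem_univ j, rfl⟩
        · rw [Finset.mem_singleton] at hv
          exact hv ▸ Finset.mem_image.mpr ⟨a₀, Finset.mem_univ a₀, rfl⟩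
    rw [himg]
    exact Finset.card_pair (fun h => ha₀H h.symm)
end

section
/- Let n ≥ 3 be an integer and let S = (g_1, ..., g_n) be a sequence of n elements of the cyclic group Z_n. If MZ(S) = n - 2, then the number of distinct elements appearing in S is at most 3. -/
set_option maxHeartbeats 1000000
set_option maxRecDepth 10000

namespace Stmt2Full

variable {n : ℕ}


variable {n : ℕ}

lemma sum_const_val (g : Fin n → ZMod n) (A : Finset (Fin n)) (x : ZMod n)
    (h : ∀ i ∈ A, g i = x) : ∑ i ∈ A, g i = A.card • x := by
  rw [Finset.sum_congr rfl h, Finset.sum_const]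

lemma two_val_eq (hn : 0 < n) (z : ZMod n) (hz : z + z = 0) (hz0 : z ≠ 0) :
    z.val * 2 = n := by
  haveI : NeZero n := ⟨by omega⟩
  have h1 : ((z.val + z.val : ℕ) : ZMod n) = 0 := by
    push_cast [ZMod.natCast_zmod_val]
    exact hz
  have h2 : n ∣ z.val + z.val := (ZMod.natCast_eq_zero_iff _ _).1 h1
  have h3 : z.val < n := ZMod.val_lt z
  have h4 : z.val ≠ 0 := by rwa [Ne, ZMod.val_eq_zero]
  obtain ⟨k, hk⟩ := h2
  rcases Nat.lt_or_ge k 2 with h | h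
  · interval_cases k <;> omega
  · nlinarith

lemma order_two_unique (hn : 0 < n) (z w : ZMod n) (hz : z + z = 0) (hw : w + w = 0)
    (hz0 : z ≠ 0) (hw0 : w ≠ 0) : z = w := by
  haveI : NeZero n := ⟨by omega⟩
  have h1 := two_val_eq hn z hz hz0
  have h2 := two_val_eq hn w hw hw0
  have h3 : z.val = w.val := by omega
  calc z = ((z.val : ℕ) : ZMod n) := (ZMod.natCast_zmod_val z).symm
    _ = ((w.val : ℕ) : ZMod n) := by rw [h3]
    _ = w := ZMod.natCast_zmod_val w

lemma parity_lemma (hn : 8 ≤ n) (g : Fin n → ZMod n)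
    (hNS : ∀ A : Finset (Fin n), A.Nonempty → A.card ≤ n - 3 → ∑ i ∈ A, g i ≠ 0)
    (T : Finset (Fin n)) (hTc : T.card = n - 2)
    (x h : ZMod n) (hh : h + h = 0) (hh0 : h ≠ 0) (hx0 : x ≠ 0) (hxh : x ≠ h)
    (hval : ∀ j ∈ T, g j = x ∨ g j = x + h ∨ g j = h)
    (hxm : x ∈ T.image g) (hym : x + h ∈ T.image g) (hhm : h ∈ T.image g) : False := by
  haveI : NeZero n := ⟨by omega⟩
  have hxy : x ≠ x + h := fun e => hh0 (left_eq_add.1 e)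
  have hyh : x + h ≠ h := fun e => hx0 (add_eq_right.1 e)
  set Tx := T.filter (fun j => g j = x) with hTx
  set Ty := T.filter (fun j => g j = x + h) with hTy
  set Th := T.filter (fun j => g j = h) with hTh
  have hmemTx : ∀ j ∈ Tx, g j = x := fun j hj => (Finset.mem_filter.1 hj).2
  have hmemTy : ∀ j ∈ Ty, g j = x + h := fun j hj => (Finset.mem_filter.1 hj).2
  have hmemTh : ∀ j ∈ Th, g j = h := fun j hj => (Finset.mem_filter.1 hj).2
  -- card Th = 1
  have hγ1 : 1 ≤ Th.card := by
    obtain ⟨j, hj, hje⟩ := Finset.mem_image.1 hhm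
    exact Finset.card_pos.2 ⟨j, Finset.mem_filter.2 ⟨hj, hje⟩⟩
  have hγ2 : Th.card ≤ 1 := by
    by_contra hg2
    obtain ⟨A, hA, hA2⟩ := Finset.exists_subset_card_eq (s := Th) (n := 2) (by omega)
    refine hNS A (Finset.card_pos.1 (by omega)) (by omega) ?_
    rw [sum_const_val g A h (fun i hi => hmemTh i (hA hi)), hA2, two_nsmul]
    exact hh
  have hγ : Th.card = 1 := le_antisymm hγ2 hγ1
  -- α + β = n - 3
  have hdisjxy : Disjoint Tx Ty := by
    rw [Finset.disjoint_left]
    intro j hjx hjy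
    exact hxy ((hmemTx j hjx).symm.trans (hmemTy j hjy))
  have hsplit : (T.filter (fun j => ¬ g j = h)).card = n - 3 := by
    have h1 := Finset.card_filter_add_card_filter_not (s := T) (p := fun j => g j = h)
    rw [← hTh, hγ, hTc] at h1
    omega
  have hXY : T.filter (fun j => ¬ g j = h) = Tx ∪ Ty := by
    ext j
    simp only [Finset.mem_filter, Finset.mem_union, hTx, hTy]
    constructor
    · rintro ⟨hjT, hne⟩
      rcases hval j hjT with e | e | e
      · exact Or.inl ⟨hjT, e⟩
      · exact Or.inr ⟨hjT, e⟩
      · exact absurd e hne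
    · rintro (⟨hjT, e⟩ | ⟨hjT, e⟩)
      · exact ⟨hjT, by rw [e]; exact hxh⟩
      · exact ⟨hjT, by rw [e]; exact hyh⟩
  have hαβ : Tx.card + Ty.card = n - 3 := by
    rw [← Finset.card_union_of_disjoint hdisjxy, ← hXY, hsplit]
  have hα1 : 1 ≤ Tx.card := by
    obtain ⟨j, hj, hje⟩ := Finset.mem_image.1 hxm
    exact Finset.card_pos.2 ⟨j, Finset.mem_filter.2 ⟨hj, hje⟩⟩
  have hβ1 : 1 ≤ Ty.card := by
    obtain ⟨j, hj, hje⟩ := Finset.mem_image.1 hym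
    exact Finset.card_pos.2 ⟨j, Finset.mem_filter.2 ⟨hj, hje⟩⟩
  -- parity of multiples of h
  have nsmul_alt : ∀ k : ℕ, k • h = 0 ∨ k • h = h := by
    intro k
    induction k with
    | zero => exact Or.inl (zero_nsmul h)
    | succ k ih =>
      rcases ih with e | e
      · exact Or.inr (by rw [succ_nsmul, e, zero_add])
      · exact Or.inl (by rw [succ_nsmul, e]; exact hh)
  -- the key claim
  have key : ∀ m : ℕ, 1 ≤ m → m ≤ n - 4 → m • x ≠ 0 ∧ m • x ≠ h := by
    intro m hm1 hm2
    have hnegh : ∀ z : ZMod n, z + h = 0 → z = h := by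
      intro z hz
      calc z = z + h + h := by rw [add_assoc, hh, add_zero]
        _ = h := by rw [hz, zero_add]
    by_cases hcase : m ≤ Tx.card
    · obtain ⟨A, hAsub, hAcard⟩ := Finset.exists_subset_card_eq (s := Tx) hcase
      have hsumA : ∑ i ∈ A, g i = m • x := by
        rw [sum_const_val g A x (fun i hi => hmemTx i (hAsub hi)), hAcard]
      constructor
      · intro h0
        exact hNS A (Finset.card_pos.1 (by omega)) (by omega) (by rw [hsumA]; exact h0)
      · intro h0
        obtain ⟨m', rfl⟩ : ∃ m', m = m' + 1 := ⟨m - 1, by omega⟩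
        obtain ⟨A', hA'sub, hA'card⟩ := Finset.exists_subset_card_eq (s := Tx)
          (show m' ≤ Tx.card by omega)
        obtain ⟨jy, hjy⟩ := Finset.card_pos.1 (by omega : 0 < Ty.card)
        have hd : Disjoint A' {jy} := by
          rw [Finset.disjoint_right]
          intro i hi hiA
          rw [Finset.mem_singleton] at hi
          subst hi
          exact hxy ((hmemTx i (hA'sub hiA)).symm.trans (hmemTy i hjy))
        refine hNS (A' ∪ {jy}) ⟨jy, Finset.mem_union_right _ (Finset.mem_singleton_self _)⟩
          ?_ ?_
        · rw [Finset.card_union_of_disjoint hd, hA'card, Finset.card_singleton]; omega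
        · rw [Finset.sum_union hd, Finset.sum_singleton,
            sum_const_val g A' x (fun i hi => hmemTx i (hA'sub hi)), hA'card, hmemTy jy hjy]
          calc m' • x + (x + h) = (m' + 1) • x + h := by rw [succ_nsmul]; ring
            _ = 0 := by rw [h0]; exact hh
    · push_neg at hcase
      set b := m - Tx.card with hbdef
      have hb1 : 1 ≤ b := by omega
      have hbβ : b ≤ Ty.card - 1 := by omega
      obtain ⟨B, hBsub, hBcard⟩ := Finset.exists_subset_card_eq (s := Ty)
        (show b ≤ Ty.card by omega)
      have hdTxB : Disjoint Tx B := by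
        rw [Finset.disjoint_right]
        intro i hiB hiTx
        exact hxy ((hmemTx i hiTx).symm.trans (hmemTy i (hBsub hiB)))
      have hsum1 : ∑ i ∈ Tx ∪ B, g i = m • x + b • h := by
        rw [Finset.sum_union hdTxB, sum_const_val g Tx x hmemTx,
          sum_const_val g B (x + h) (fun i hi => hmemTy i (hBsub hi)), hBcard]
        rw [nsmul_add]
        have : Tx.card • x + b • x = m • x := by rw [← add_nsmul]; congr 1; omega
        calc Tx.card • x + (b • x + b • h) = (Tx.card • x + b • x) + b • h := by ring
          _ = m • x + b • h := by rw [this]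
      obtain ⟨jh, hjh⟩ := Finset.card_pos.1 (by omega : 0 < Th.card)
      have hjhn : jh ∉ Tx ∪ B := by
        intro hmem
        rcases Finset.mem_union.1 hmem with hm | hm
        · exact hxh (((hmemTx jh hm).symm.trans (hmemTh jh hjh)))
        · exact hyh (((hmemTy jh (hBsub hm)).symm.trans (hmemTh jh hjh)))
      have hsum2 : ∑ i ∈ insert jh (Tx ∪ B), g i = m • x + (b + 1) • h := by
        rw [Finset.sum_insert hjhn, hsum1, hmemTh jh hjh, succ_nsmul]
        ring
      have hcard1 : (Tx ∪ B).card = m := by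
        rw [Finset.card_union_of_disjoint hdTxB, hBcard]; omega
      have hne1 : ∑ i ∈ Tx ∪ B, g i ≠ 0 := by
        refine hNS _ (Finset.card_pos.1 (by omega)) (by omega) 
      have hne2 : ∑ i ∈ insert jh (Tx ∪ B), g i ≠ 0 := by
        refine hNS _ ⟨jh, Finset.mem_insert_self _ _⟩ ?_
        rw [Finset.card_insert_of_notMem hjhn, hcard1]; omega
      rw [hsum1] at hne1
      rw [hsum2] at hne2
      rcases nsmul_alt b with e | e
      · rw [e, add_zero] at hne1
        rw [succ_nsmul, e, zero_add] at hne2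
        exact ⟨hne1, fun hc => hne2 (by rw [hc]; exact hh)⟩
      · rw [e] at hne1
        rw [succ_nsmul, e] at hne2
        constructor
        · intro hc
          apply hne2
          rw [hc, zero_add]
          exact hh
        · intro hc
          exact hne1 (by rw [hc]; exact hh)
  -- finale
  have hval2 : h.val * 2 = n := two_val_eq (by omega) h hh hh0
  have hv1 : 1 ≤ h.val := by
    have : h.val ≠ 0 := by rwa [Ne, ZMod.val_eq_zero]
    omega
  obtain ⟨k1, k2⟩ := key h.val (by omega) (by omega)
  have hz2 : h.val • x + h.val • x = 0 := by
    rw [← add_nsmul]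
    have he : h.val + h.val = n := by omega
    rw [he]
    simp [nsmul_eq_mul, ZMod.natCast_self]
  by_cases hz0 : h.val • x = 0
  · exact k1 hz0
  · exact k2 (order_two_unique (by omega) _ _ hz2 hh hz0 hh0)






lemma triple_lemma (hn : 8 ≤ n) (g : Fin n → ZMod n)
    (hNS : ∀ A : Finset (Fin n), A.Nonempty → A.card ≤ n - 3 → ∑ i ∈ A, g i ≠ 0)
    (T : Finset (Fin n)) (hTc : T.card = n - 2)
    (i1 i2 i3 : Fin n) (h1 : i1 ∈ T) (h2 : i2 ∈ T) (h3 : i3 ∈ T)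
    (a b c : ZMod n) (ha : g i1 = a) (hb : g i2 = b) (hc : g i3 = c)
    (hab : a ≠ b) (hac : a ≠ c) (hbc : b ≠ c) :
    ∃ h : ZMod n, h + h = 0 ∧ h ≠ 0 ∧
      ((a = h ∧ c = b + h) ∨ (b = h ∧ c = a + h) ∨ (c = h ∧ b = a + h)) := by
  haveI : NeZero n := ⟨by omega⟩
  have d12 : i1 ≠ i2 := fun e => hab (by rw [← ha, ← hb, e])
  have d13 : i1 ≠ i3 := fun e => hac (by rw [← ha, ← hc, e])
  have d23 : i2 ≠ i3 := fun e => hbc (by rw [← hb, ← hc, e])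
  -- nonzero values
  have hnz : ∀ i ∈ T, g i ≠ 0 := by
    intro i hi h0
    exact hNS {i} ⟨i, Finset.mem_singleton_self i⟩
      (by rw [Finset.card_singleton]; omega) (by rw [Finset.sum_singleton]; exact h0)
  have ha0 : a ≠ 0 := ha ▸ hnz i1 h1
  have hb0 : b ≠ 0 := hb ▸ hnz i2 h2
  have hc0 : c ≠ 0 := hc ▸ hnz i3 h3
  -- the remainder set
  set R : Finset (Fin n) := ((T.erase i1).erase i2).erase i3 with hR
  have hi2e : i2 ∈ T.erase i1 := Finset.mem_erase.2 ⟨fun e => d12 e.symm, h2⟩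
  have hi3e : i3 ∈ (T.erase i1).erase i2 := Finset.mem_erase.2 ⟨fun e => d23 e.symm,
    Finset.mem_erase.2 ⟨fun e => d13 e.symm, h3⟩⟩
  have hRcard : R.card = n - 5 := by
    rw [hR, Finset.card_erase_of_mem hi3e, Finset.card_erase_of_mem hi2e,
      Finset.card_erase_of_mem h1, hTc]
    omega
  have hmemR : ∀ j ∈ R, j ∈ T ∧ j ≠ i1 ∧ j ≠ i2 ∧ j ≠ i3 := by
    intro j hj
    simp only [hR, Finset.mem_erase] at hj
    tauto
  -- the chain
  set l : List (Fin n) := R.toList with hl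
  have hlnd : l.Nodup := R.nodup_toList
  have hllen : l.length = n - 5 := by rw [hl, Finset.length_toList, hRcard]
  set S : ℕ → Finset (Fin n) := fun k => (l.take k).toFinset with hS
  have hScard : ∀ k, k ≤ n - 5 → (S k).card = k := by
    intro k hk
    show ((l.take k).toFinset).card = k
    rw [List.toFinset_card_of_nodup (hlnd.sublist (List.take_sublist _ _)), List.length_take]
    omega
  have hSsub : ∀ j k, j ≤ k → S j ⊆ S k := by
    intro j k hjk i hi
    show i ∈ (l.take k).toFinset
    rw [List.mem_toFinset] at hi ⊢
    have he : l.take j = (l.take k).take j := by rw [List.take_take, min_eq_left hjk]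
    rw [he] at hi
    exact List.take_subset _ _ hi
  have hSR : ∀ k, S k ⊆ R := by
    intro k i hi
    rw [hS] at hi
    simp only at hi
    rw [List.mem_toFinset] at hi
    exact (Finset.mem_toList).1 (List.take_subset _ _ hi)
  -- distinctness of chain sums
  have hdiff : ∀ j k, j < k → k ≤ n - 5 →
      (a + b + c) + ∑ i ∈ S j, g i ≠ (a + b + c) + ∑ i ∈ S k, g i := by
    intro j k hjk hk he
    have hsub := hSsub j k hjk.le
    have heq : ∑ i ∈ S j, g i = ∑ i ∈ S k, g i := by
      exact add_left_cancel he
    have hs := Finset.sum_sdiff (f := g) hsub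
    rw [heq] at hs
    have hzero : ∑ i ∈ S k \ S j, g i = 0 := by
      have h' : ∑ x ∈ S k \ S j, g x + ∑ x ∈ S k, g x = 0 + ∑ x ∈ S k, g x := by
        rw [zero_add]; exact hs
      exact add_right_cancel h'
    have hcard : (S k \ S j).card = k - j := by
      rw [Finset.card_sdiff_of_subset hsub, hScard k hk, hScard j (by omega)]
    exact hNS _ (Finset.card_pos.1 (by omega)) (by omega) hzero
  -- E
  set E : Finset (ZMod n) :=
    (Finset.range (n - 4)).image (fun k => (a + b + c) + ∑ i ∈ S k, g i) with hE
  have hEcard : E.card = n - 4 := by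
    rw [hE, Finset.card_image_of_injOn, Finset.card_range]
    intro j hj k hk hjk2
    simp only [Finset.coe_range, Set.mem_Iio] at hj hk
    rcases lt_trichotomy j k with h | h | h
    · exact absurd hjk2 (hdiff j k h (by omega))
    · exact h
    · exact absurd hjk2.symm (hdiff k j h (by omega))
  -- join helper
  have hjoin : ∀ J : Finset (Fin n), J ⊆ {i1, i2, i3} → J.Nonempty → J.card ≤ 2 →
      ∀ k, k ≤ n - 5 → (∑ i ∈ J, g i) + ∑ i ∈ S k, g i ≠ 0 := by
    intro J hJsub hJne hJ2 k hk h0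
    have hdisj : Disjoint J (S k) := by
      rw [Finset.disjoint_left]
      intro i hiJ hiS
      have h' := hmemR i (hSR k hiS)
      have h'' := hJsub hiJ
      simp only [Finset.mem_insert, Finset.mem_singleton] at h''
      rcases h'' with e | e | e <;> subst e <;> tauto
    refine hNS (J ∪ S k) (hJne.mono Finset.subset_union_left) ?_ ?_
    · rw [Finset.card_union_of_disjoint hdisj, hScard k hk]
      omega
    · rw [Finset.sum_union hdisj]
      exact h0
  -- six non-membership facts
  have hnotE : ∀ z : ZMod n, ∀ J : Finset (Fin n), J ⊆ {i1, i2, i3} → J.Nonempty →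
      J.card ≤ 2 → (∀ k, k ≤ n - 5 → ((a + b + c) + ∑ i ∈ S k, g i = z →
        (∑ i ∈ J, g i) + ∑ i ∈ S k, g i = 0)) → z ∉ E := by
    intro z J hJsub hJne hJ2 himp hmem
    rw [hE, Finset.mem_image] at hmem
    obtain ⟨k, hk, hkt⟩ := hmem
    rw [Finset.mem_range] at hk
    exact hjoin J hJsub hJne hJ2 k (by omega) (himp k (by omega) hkt)
  have haE : a ∉ E := by
    refine hnotE a {i2, i3} ?_ ⟨i2, by simp⟩ ?_ ?_
    · intro z hz; simp only [Finset.mem_insert, Finset.mem_singleton] at hz ⊢; tauto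
    · exact (Finset.card_insert_le _ _).trans (by simp)
    · intro k hk he
      rw [Finset.sum_pair d23, hb, hc]
      linear_combination he
  have hbE : b ∉ E := by
    refine hnotE b {i1, i3} ?_ ⟨i1, by simp⟩ ?_ ?_
    · intro z hz; simp only [Finset.mem_insert, Finset.mem_singleton] at hz ⊢; tauto
    · exact (Finset.card_insert_le _ _).trans (by simp)
    · intro k hk he
      rw [Finset.sum_pair d13, ha, hc]
      linear_combination he
  have hcE : c ∉ E := by
    refine hnotE c {i1, i2} ?_ ⟨i1, by simp⟩ ?_ ?_
    · intro z hz; simp only [Finset.mem_insert, Finset.mem_singleton] at hz ⊢; tauto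
    · exact (Finset.card_insert_le _ _).trans (by simp)
    · intro k hk he
      rw [Finset.sum_pair d12, ha, hb]
      linear_combination he
  have habE : a + b ∉ E := by
    refine hnotE (a + b) {i3} ?_ ⟨i3, by simp⟩ (by simp) ?_
    · intro z hz; simp only [Finset.mem_singleton] at hz; simp [hz]
    · intro k hk he
      rw [Finset.sum_singleton, hc]
      linear_combination he
  have hacE : a + c ∉ E := by
    refine hnotE (a + c) {i2} ?_ ⟨i2, by simp⟩ (by simp) ?_
    · intro z hz; simp only [Finset.mem_singleton] at hz; simp [hz]
    · intro k hk he
      rw [Finset.sum_singleton, hb]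
      linear_combination he
  have hbcE : b + c ∉ E := by
    refine hnotE (b + c) {i1} ?_ ⟨i1, by simp⟩ (by simp) ?_
    · intro z hz; simp only [Finset.mem_singleton] at hz; simp [hz]
    · intro k hk he
      rw [Finset.sum_singleton, ha]
      linear_combination he
  -- the six-element set
  set F : Finset (ZMod n) := {a, b, c, a + b, a + c, b + c} with hF
  have hFdisj : Disjoint F E := by
    rw [Finset.disjoint_left]
    intro z hz hzE
    simp only [hF, Finset.mem_insert, Finset.mem_singleton] at hz
    rcases hz with e | e | e | e | e | e <;> subst e <;> tauto
  have hFE : F.card + E.card ≤ n := by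
    rw [← Finset.card_union_of_disjoint hFdisj]
    have h1 := Finset.card_le_univ (F ∪ E)
    rwa [ZMod.card] at h1
  have hF4 : F.card ≤ 4 := by omega
  set A : Finset (ZMod n) := {a, b, c} with hA
  set B : Finset (ZMod n) := {a + b, a + c, b + c} with hB
  have hAcard : A.card = 3 := Finset.card_eq_three.mpr ⟨a, b, c, hab, hac, hbc, rfl⟩
  have hBcard : B.card = 3 := Finset.card_eq_three.mpr ⟨a + b, a + c, b + c,
    fun e => hbc (by linear_combination e), fun e => hac (by linear_combination e),
    fun e => hab (by linear_combination e), rfl⟩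
  have hFAB : F = A ∪ B := by
    ext z
    simp only [hF, hA, hB, Finset.mem_insert, Finset.mem_singleton, Finset.mem_union]
    tauto
  have hABint : 2 ≤ (A ∩ B).card := by
    have h1 := Finset.card_union_add_card_inter A B
    rw [← hFAB] at h1
    omega
  obtain ⟨u, hu, v, hv, huv⟩ := Finset.one_lt_card.mp (by omega : 1 < (A ∩ B).card)
  have hrel : ∀ z ∈ A ∩ B, (z = a + b ∧ a + b = c) ∨ (z = a + c ∧ a + c = b) ∨
      (z = b + c ∧ b + c = a) := by
    intro z hz
    rw [Finset.mem_inter] at hz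
    obtain ⟨hzA, hzB⟩ := hz
    simp only [hA, hB, Finset.mem_insert, Finset.mem_singleton] at hzA hzB
    rcases hzB with e | e | e <;> subst e
    · refine Or.inl ⟨rfl, ?_⟩
      rcases hzA with e | e | e
      · exact absurd (by linear_combination e : b = 0) hb0
      · exact absurd (by linear_combination e : a = 0) ha0
      · exact e
    · refine Or.inr (Or.inl ⟨rfl, ?_⟩)
      rcases hzA with e | e | e
      · exact absurd (by linear_combination e : c = 0) hc0
      · exact e
      · exact absurd (by linear_combination e : a = 0) ha0
    · refine Or.inr (Or.inr ⟨rfl, ?_⟩)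
      rcases hzA with e | e | e
      · exact e
      · exact absurd (by linear_combination e : c = 0) hc0
      · exact absurd (by linear_combination e : b = 0) hb0
  have hu' := hrel u hu
  have hv' := hrel v hv
  -- two distinct relations hold
  have hP : (a + b = c ∧ a + c = b) ∨ (a + b = c ∧ b + c = a) ∨ (a + c = b ∧ b + c = a) := by
    rcases hu' with ⟨e1, p1⟩ | ⟨e1, p1⟩ | ⟨e1, p1⟩ <;>
      rcases hv' with ⟨e2, p2⟩ | ⟨e2, p2⟩ | ⟨e2, p2⟩
    · exact absurd (e1.trans e2.symm) huv
    · exact Or.inl ⟨p1, p2⟩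
    · exact Or.inr (Or.inl ⟨p1, p2⟩)
    · exact Or.inl ⟨p2, p1⟩
    · exact absurd (e1.trans e2.symm) huv
    · exact Or.inr (Or.inr ⟨p1, p2⟩)
    · exact Or.inr (Or.inl ⟨p2, p1⟩)
    · exact Or.inr (Or.inr ⟨p2, p1⟩)
    · exact absurd (e1.trans e2.symm) huv
  rcases hP with ⟨p1, p2⟩ | ⟨p1, p2⟩ | ⟨p1, p2⟩
  · exact ⟨a, by linear_combination p1 + p2, ha0, Or.inl ⟨rfl, by linear_combination -p1⟩⟩
  · exact ⟨b, by linear_combination p1 + p2, hb0, Or.inr (Or.inl ⟨rfl, by linear_combination -p1⟩)⟩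
  · exact ⟨c, by linear_combination p1 + p2, hc0, Or.inr (Or.inr ⟨rfl, by linear_combination -p1⟩)⟩







lemma card_triple_le {γ : Type*} [DecidableEq γ] (a b c : γ) :
    ({a, b, c} : Finset γ).card ≤ 3 := by
  calc ({a,b,c} : Finset γ).card ≤ ({b,c} : Finset γ).card + 1 := Finset.card_insert_le _ _
    _ ≤ (({c} : Finset γ).card + 1) + 1 := Nat.succ_le_succ (Finset.card_insert_le _ _)
    _ ≤ 3 := by simp

lemma dvd_eq_self {n m : ℕ} (h : n ∣ m) (h1 : 0 < m) (h2 : m < 2 * n) : m = n := by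
  obtain ⟨k, rfl⟩ := h
  rcases Nat.lt_or_ge k 2 with h' | h'
  · interval_cases k <;> omega
  · have h3 : n * 2 ≤ n * k := Nat.mul_le_mul_left n h'
    omega

lemma main_two (hn : 8 ≤ n) (g : Fin n → ZMod n)
    (hNS : ∀ A : Finset (Fin n), A.Nonempty → A.card ≤ n - 3 → ∑ i ∈ A, g i ≠ 0)
    (T : Finset (Fin n)) (hTc : T.card = n - 2) (hTs : ∑ i ∈ T, g i = 0)
    (x y : ZMod n) (hxy : x ≠ y)
    (hval : ∀ j ∈ T, g j = x ∨ g j = y)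
    (hym : y ∈ T.image g)
    (hba : (T.filter (fun j => g j = y)).card ≤ (T.filter (fun j => g j = x)).card) :
    (Finset.univ.image g).card ≤ 3 := by
  haveI : NeZero n := ⟨by omega⟩
  set Tx := T.filter (fun j => g j = x) with hTxd
  set Ty := T.filter (fun j => g j = y) with hTyd
  have hmemTx : ∀ j ∈ Tx, g j = x := fun j hj => (Finset.mem_filter.1 hj).2
  have hmemTy : ∀ j ∈ Ty, g j = y := fun j hj => (Finset.mem_filter.1 hj).2
  have hdisj : Disjoint Tx Ty := by
    rw [Finset.disjoint_left]
    intro j hjx hjy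
    exact hxy ((hmemTx j hjx).symm.trans (hmemTy j hjy))
  have hunion : Tx ∪ Ty = T := by
    ext j
    simp only [Finset.mem_union, hTxd, hTyd, Finset.mem_filter]
    constructor
    · rintro (⟨hj, _⟩ | ⟨hj, _⟩) <;> exact hj
    · intro hj
      rcases hval j hj with e | e
      · exact Or.inl ⟨hj, e⟩
      · exact Or.inr ⟨hj, e⟩
  have hαβ : Tx.card + Ty.card = n - 2 := by
    rw [← Finset.card_union_of_disjoint hdisj, hunion, hTc]
  have hβ1 : 1 ≤ Ty.card := by
    obtain ⟨j, hj, hje⟩ := Finset.mem_image.1 hym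
    exact Finset.card_pos.2 ⟨j, Finset.mem_filter.2 ⟨hj, hje⟩⟩
  have hfull : Tx.card • x + Ty.card • y = 0 := by
    rw [← sum_const_val g Tx x hmemTx, ← sum_const_val g Ty y hmemTy,
      ← Finset.sum_union hdisj, hunion]
    exact hTs
  have Lsum : ∀ a b : ℕ, a ≤ Tx.card → b ≤ Ty.card → 1 ≤ a + b → a + b ≤ n - 3 →
      a • x + b • y ≠ 0 := by
    intro a b haa hbb hab1 hab2 h0
    obtain ⟨A, hA, hAc⟩ := Finset.exists_subset_card_eq (s := Tx) haa
    obtain ⟨B, hB, hBc⟩ := Finset.exists_subset_card_eq (s := Ty) hbb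
    have hd : Disjoint A B := hdisj.mono hA hB
    refine hNS (A ∪ B) (Finset.card_pos.1 ?_) ?_ ?_
    · rw [Finset.card_union_of_disjoint hd, hAc, hBc]; omega
    · rw [Finset.card_union_of_disjoint hd, hAc, hBc]; omega
    · rw [Finset.sum_union hd, sum_const_val g A x (fun i hi => hmemTx i (hA hi)),
        sum_const_val g B y (fun i hi => hmemTy i (hB hi)), hAc, hBc]
      exact h0
  have hx0 : x ≠ 0 := by
    have h1 := Lsum 1 0 (by omega) (by omega) (by omega) (by omega)
    simpa using h1
  have hy0 : y ≠ 0 := by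
    have h1 := Lsum 0 1 (by omega) (by omega) (by omega) (by omega)
    simpa using h1
  -- coprimality of x.val with n
  have hcop : Nat.gcd n x.val = 1 := by
    by_contra hg
    have hgd1 : Nat.gcd n x.val ∣ n := Nat.gcd_dvd_left _ _
    have hgd2 : Nat.gcd n x.val ∣ x.val := Nat.gcd_dvd_right _ _
    have hg0 : 0 < Nat.gcd n x.val := Nat.gcd_pos_of_pos_left _ (by omega)
    have hd02 : 2 ≤ Nat.gcd n x.val := by omega
    set d := n / Nat.gcd n x.val with hdd0
    have hdd : d * Nat.gcd n x.val = n := Nat.div_mul_cancel hgd1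
    have h2d : 2 * d ≤ n := by
      have h' : d * 2 ≤ d * Nat.gcd n x.val := Nat.mul_le_mul_left d hd02
      omega
    have hd1 : 1 ≤ d := by
      rcases Nat.eq_zero_or_pos d with e | e
      · rw [e] at hdd; omega
      · omega
    have hdx : d • x = 0 := by
      have hc : d • x = ((d * x.val : ℕ) : ZMod n) := by
        rw [nsmul_eq_mul]
        conv_lhs => rw [← ZMod.natCast_zmod_val x]
        push_cast
        ring
      rw [hc, ZMod.natCast_eq_zero_iff]
      obtain ⟨m, hm⟩ := hgd2
      refine ⟨m, ?_⟩
      calc d * x.val = d * (Nat.gcd n x.val * m) := by conv_lhs => rw [hm]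
        _ = d * Nat.gcd n x.val * m := by ring
        _ = n * m := by rw [hdd]
    by_cases hdα : d ≤ Tx.card
    · have h1 := Lsum d 0 hdα (by omega) (by omega) (by omega)
      apply h1
      simpa using hdx
    · push_neg at hdα
      have hcc : Tx.card = Ty.card ∧ n = 2 * Tx.card + 2 := by omega
      have hαs : Tx.card • (x + y) = 0 := by
        rw [smul_add]
        rw [← hcc.1] at hfull
        exact hfull
      have hns : n • (x + y) = 0 := by
        simp [nsmul_eq_mul, ZMod.natCast_self]
      have he1 : addOrderOf (x + y) ∣ Tx.card := addOrderOf_dvd_of_nsmul_eq_zero hαs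
      have he2 : addOrderOf (x + y) ∣ n := addOrderOf_dvd_of_nsmul_eq_zero hns
      have he0 : 0 < addOrderOf (x + y) := addOrderOf_pos _
      have hes : addOrderOf (x + y) • (x + y) = 0 := addOrderOf_nsmul_eq_zero _
      have he2' : addOrderOf (x + y) ≤ 2 := by
        have h1 : addOrderOf (x + y) ∣ 2 * Tx.card := Dvd.dvd.mul_left he1 2
        have h2 : addOrderOf (x + y) ∣ 2 * Tx.card + 2 := by rw [← hcc.2]; exact he2
        have h3 := Nat.dvd_sub h2 h1
        have h4 : 2 * Tx.card + 2 - 2 * Tx.card = 2 := by omega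
        rw [h4] at h3
        exact Nat.le_of_dvd (by norm_num) h3
      refine Lsum (addOrderOf (x + y)) (addOrderOf (x + y)) (by omega) (by omega)
        (by omega) (by omega) ?_
      rw [← smul_add]
      exact hes
  -- x is a unit
  have hxunit : IsUnit x := by
    rw [← ZMod.natCast_zmod_val x]
    exact (ZMod.isUnit_iff_coprime x.val n).2 (Nat.coprime_comm.mp hcop)
  obtain ⟨xu, hxu⟩ := hxunit
  have hzc : ∀ z : ZMod n, (((z * ↑xu⁻¹).val : ℕ) : ZMod n) * x = z := by
    intro z
    rw [ZMod.natCast_zmod_val, ← hxu]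
    calc z * ↑xu⁻¹ * ↑xu = z * (↑xu⁻¹ * ↑xu) := by ring
      _ = z := by rw [← Units.val_mul, inv_mul_cancel, Units.val_one, mul_one]
  set w := (y * ↑xu⁻¹).val with hwdef
  have hyw : ((w : ℕ) : ZMod n) * x = y := hzc y
  have hwlt : w < n := ZMod.val_lt _
  have hsum_cast : ∀ a b : ℕ, a • x + b • y = ((a + b * w : ℕ) : ZMod n) * x := by
    intro a b
    rw [← hyw, nsmul_eq_mul, nsmul_eq_mul]
    push_cast
    ring
  have Knum : ∀ a b : ℕ, a ≤ Tx.card → b ≤ Ty.card → 1 ≤ a + b → a + b ≤ n - 3 →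
      ¬ (n ∣ a + b * w) := by
    intro a b h1 h2 h3 h4 hdvd
    apply Lsum a b h1 h2 h3 h4
    rw [hsum_cast, (ZMod.natCast_eq_zero_iff _ _).2 hdvd, zero_mul]
  have Kfull : n ∣ Tx.card + Ty.card * w := by
    have h1 : ((Tx.card + Ty.card * w : ℕ) : ZMod n) * x = 0 := by
      rw [← hsum_cast]; exact hfull
    rw [← hxu] at h1
    have h2 : ((Tx.card + Ty.card * w : ℕ) : ZMod n) = 0 := (Units.mul_left_eq_zero xu).1 h1
    exact (ZMod.natCast_eq_zero_iff _ _).1 h2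
  have hw0 : w ≠ 0 := by
    intro e
    apply hy0
    rw [← hyw, e, Nat.cast_zero, zero_mul]
  have hw1 : w ≠ 1 := by
    intro e
    apply hxy
    rw [← hyw, e, Nat.cast_one, one_mul]
  have hw3 : w ≤ 3 ∨ w ≤ Ty.card + 1 := by
    by_contra hcon
    push_neg at hcon
    exact Knum (n - w) 1 (by omega) (by omega) (by omega) (by omega) ⟨1, by omega⟩
  have hpat : (w = 2 ∧ Ty.card = 2) ∨ (w = 3 ∧ Ty.card = 1) := by
    by_cases hw2 : w = 2
    · left
      refine ⟨hw2, ?_⟩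
      rw [hw2] at Kfull
      have hm := dvd_eq_self Kfull (by omega) (by omega)
      omega
    by_cases hw3' : w = 3
    · right
      refine ⟨hw3', ?_⟩
      rw [hw3'] at Kfull
      have hm := dvd_eq_self Kfull (by omega) (by omega)
      omega
    · exfalso
      have h4w : 4 ≤ w := by omega
      have hwβ : w ≤ Ty.card + 1 := by
        rcases hw3 with h | h
        · omega
        · exact h
      have hq := Nat.div_add_mod (Ty.card + 1) w
      have hr : (Ty.card + 1) % w < w := Nat.mod_lt _ (by omega)
      set b1 := (Ty.card + 1) / w + 1 with hb1d
      have hb11 : 1 ≤ b1 := by rw [hb1d]; exact Nat.le_add_left 1 _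
      have hPq : b1 * w = w * ((Ty.card + 1) / w) + w := by rw [hb1d]; ring
      have h44 : b1 * 4 ≤ b1 * w := Nat.mul_le_mul_left b1 h4w
      have key1 : b1 ≤ Ty.card := by omega
      have key2 : b1 * w ≤ n := by omega
      have key3 : n - b1 * w ≤ Tx.card := by omega
      have ha1 : n - b1 * w + b1 * w = n := Nat.sub_add_cancel key2
      rcases Nat.lt_or_ge (n - b1 * w + b1) (n - 2) with hcs | hcs
      · exact Knum (n - b1 * w) b1 key3 key1 (by omega) (by omega) ⟨1, by omega⟩
      · have heq : b1 = Ty.card := by omega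
        rw [heq] at key2 key3 hcs ha1
        have hmul : Ty.card * 4 ≤ Ty.card * w := Nat.mul_le_mul_left _ h4w
        omega
  -- final stage
  have hα4 : n - 4 ≤ Tx.card := by rcases hpat with ⟨_, e⟩ | ⟨_, e⟩ <;> omega
  have himg : Finset.univ.image g ⊆ {x, 2 * x, 3 * x} := by
    intro z hz
    rw [Finset.mem_image] at hz
    obtain ⟨i, _, rfl⟩ := hz
    by_cases hiT : i ∈ T
    · rcases hval i hiT with e | e
      · rw [e]
        exact Finset.mem_insert_self _ _
      · rw [e, ← hyw]
        rcases hpat with ⟨hw2, _⟩ | ⟨hw3', _⟩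
        · rw [hw2]
          push_cast
          simp [Finset.mem_insert]
        · rw [hw3']
          push_cast
          simp [Finset.mem_insert]
    · set c := ((g i) * ↑xu⁻¹).val with hcd
      have hgc : ((c : ℕ) : ZMod n) * x = g i := hzc (g i)
      have hclt : c < n := ZMod.val_lt _
      have hcon : ∀ a : ℕ, a ≤ n - 4 → ¬ (n ∣ c + a) := by
        intro a haa hdvd
        obtain ⟨A, hA, hAc⟩ := Finset.exists_subset_card_eq
          (s := Tx) (show a ≤ Tx.card by omega)
        have hiA : i ∉ A := fun hiA => hiT (Finset.mem_filter.1 (hA hiA)).1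
        refine hNS (insert i A) ⟨i, Finset.mem_insert_self _ _⟩ ?_ ?_
        · rw [Finset.card_insert_of_notMem hiA, hAc]; omega
        · rw [Finset.sum_insert hiA,
            sum_const_val g A x (fun j hj => hmemTx j (hA hj)), hAc]
          rw [← hgc, nsmul_eq_mul]
          have hz0 : ((c + a : ℕ) : ZMod n) = 0 := (ZMod.natCast_eq_zero_iff _ _).2 hdvd
          push_cast at hz0 ⊢
          linear_combination x * hz0
      have hc3 : c = 1 ∨ c = 2 ∨ c = 3 := by
        by_contra hcc
        push_neg at hcc
        by_cases hc0 : c = 0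
        · exact hcon 0 (by omega) (by rw [hc0]; simp)
        · exact hcon (n - c) (by omega) ⟨1, by omega⟩
      rcases hc3 with e | e | e <;> rw [← hgc, e] <;> push_cast <;>
        simp [Finset.mem_insert]
  calc (Finset.univ.image g).card ≤ ({x, 2 * x, 3 * x} : Finset (ZMod n)).card :=
        Finset.card_le_card himg
    _ ≤ 3 := card_triple_le _ _ _


lemma no_three (hn : 8 ≤ n) (g : Fin n → ZMod n)
    (hNS : ∀ A : Finset (Fin n), A.Nonempty → A.card ≤ n - 3 → ∑ i ∈ A, g i ≠ 0)
    (T : Finset (Fin n)) (hTc : T.card = n - 2)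
    (a b c : ZMod n) (ham : a ∈ T.image g) (hbm : b ∈ T.image g) (hcm : c ∈ T.image g)
    (hab : a ≠ b) (hac : a ≠ c) (hbc : b ≠ c) : False := by
  haveI : NeZero n := ⟨by omega⟩
  obtain ⟨i1, hi1, ha⟩ := Finset.mem_image.1 ham
  obtain ⟨i2, hi2, hb⟩ := Finset.mem_image.1 hbm
  obtain ⟨i3, hi3, hc⟩ := Finset.mem_image.1 hcm
  obtain ⟨h, hh2, hh0, hpat⟩ := triple_lemma hn g hNS T hTc i1 i2 i3 hi1 hi2 hi3
    a b c ha hb hc hab hac hbc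
  by_cases hd : ∃ d ∈ T.image g, d ≠ a ∧ d ≠ b ∧ d ≠ c
  · obtain ⟨d, hdm, hda, hdb, hdc⟩ := hd
    obtain ⟨i4, hi4, hdv⟩ := Finset.mem_image.1 hdm
    obtain ⟨h', hh2', hh0', hpat'⟩ := triple_lemma hn g hNS T hTc i1 i2 i4 hi1 hi2 hi4
      a b d ha hb hdv hab hda.symm hdb.symm
    have hhh : h = h' := order_two_unique (by omega) h h' hh2 hh2' hh0 hh0'
    subst hhh
    rcases hpat with ⟨e1, e2⟩ | ⟨e1, e2⟩ | ⟨e1, e2⟩ <;>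
      rcases hpat' with ⟨f1, f2⟩ | ⟨f1, f2⟩ | ⟨f1, f2⟩
    · exact hdc (f2.trans e2.symm)
    · exact hab (e1.trans f1.symm)
    · exact hda (f1.trans e1.symm)
    · exact hab (f1.trans e1.symm)
    · exact hdc (f2.trans e2.symm)
    · exact hdb (f1.trans e1.symm)
    · exact hac (f1.trans e1.symm)
    · exact hbc (f1.trans e1.symm)
    · exact hdc (f1.trans e1.symm)
  · push_neg at hd
    have hval : ∀ j ∈ T, g j = a ∨ g j = b ∨ g j = c := by
      intro j hj
      rcases eq_or_ne (g j) a with e | e1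
      · exact Or.inl e
      rcases eq_or_ne (g j) b with e | e2
      · exact Or.inr (Or.inl e)
      rcases eq_or_ne (g j) c with e | e3
      · exact Or.inr (Or.inr e)
      exact absurd e3 (by simpa using hd (g j) (Finset.mem_image_of_mem g hj) e1 e2)
    have hnz : ∀ i ∈ T, g i ≠ 0 := by
      intro i hi h0
      exact hNS {i} ⟨i, Finset.mem_singleton_self i⟩
        (by rw [Finset.card_singleton]; omega) (by rw [Finset.sum_singleton]; exact h0)
    rcases hpat with ⟨e1, e2⟩ | ⟨e1, e2⟩ | ⟨e1, e2⟩
    · -- a = h, c = b + h : x := b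
      refine parity_lemma hn g hNS T hTc b h hh2 hh0 ?_ ?_ ?_ ?_ ?_ ?_
      · rw [← hb]; exact hnz i2 hi2
      · rw [← e1]; exact fun e => hab e.symm
      · intro j hj
        rcases hval j hj with e | e | e
        · exact Or.inr (Or.inr (by rw [e, e1]))
        · exact Or.inl e
        · exact Or.inr (Or.inl (by rw [e, e2]))
      · exact hbm
      · rw [← e2]; exact hcm
      · rw [← e1]; exact ham
    · -- b = h, c = a + h : x := a
      refine parity_lemma hn g hNS T hTc a h hh2 hh0 ?_ ?_ ?_ ?_ ?_ ?_
      · rw [← ha]; exact hnz i1 hi1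
      · rw [← e1]; exact hab
      · intro j hj
        rcases hval j hj with e | e | e
        · exact Or.inl e
        · exact Or.inr (Or.inr (by rw [e, e1]))
        · exact Or.inr (Or.inl (by rw [e, e2]))
      · exact ham
      · rw [← e2]; exact hcm
      · rw [← e1]; exact hbm
    · -- c = h, b = a + h : x := a
      refine parity_lemma hn g hNS T hTc a h hh2 hh0 ?_ ?_ ?_ ?_ ?_ ?_
      · rw [← ha]; exact hnz i1 hi1
      · rw [← e1]; exact hac
      · intro j hj
        rcases hval j hj with e | e | e
        · exact Or.inl e
        · exact Or.inr (Or.inl (by rw [e, e2]))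
        · exact Or.inr (Or.inr (by rw [e, e1]))
      · exact ham
      · rw [← e2]; exact hbm
      · rw [← e1]; exact hcm

end Stmt2Full

/-- If `S` is a sequence of `n ≥ 3` elements of `ℤ/nℤ` with `MZ(S) = n - 2`,
then `S` has at most 3 distinct elements. -/
theorem stmt_2 (n : ℕ) (hn : 3 ≤ n) (g : Fin n → ZMod n)
    (hMZ : IsLeast {m : ℕ | ∃ T : Finset (Fin n),
      T.Nonempty ∧ ∑ i ∈ T, g i = 0 ∧ T.card = m} (n - 2)) :
    (Finset.univ.image g).card ≤ 3 := by
  obtain ⟨hmem, hlb⟩ := hMZ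
  obtain ⟨T, hTne, hTsum, hTcard⟩ := hmem
  have hNS : ∀ A : Finset (Fin n), A.Nonempty → A.card ≤ n - 3 → ∑ i ∈ A, g i ≠ 0 := by
    intro A hA hAc hsum
    have h1 : n - 2 ≤ A.card := hlb ⟨A, hA, hsum, rfl⟩
    have h2 : 1 ≤ A.card := Finset.card_pos.2 hA
    omega
  have h0img : 4 ≤ n → (0 : ZMod n) ∉ Finset.univ.image g := by
    intro h4 hmem0
    obtain ⟨i, _, hi⟩ := Finset.mem_image.1 hmem0
    exact hNS {i} ⟨i, Finset.mem_singleton_self i⟩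
      (by rw [Finset.card_singleton]; omega) (by rw [Finset.sum_singleton]; exact hi)
  have hpair : 5 ≤ n → ∀ z ∈ Finset.univ.image g, ∀ w ∈ Finset.univ.image g,
      z + w = 0 → z = w := by
    intro h5 z hz w hw hzw
    by_contra hne
    obtain ⟨i, _, hi⟩ := Finset.mem_image.1 hz
    obtain ⟨j, _, hj⟩ := Finset.mem_image.1 hw
    have hij : i ≠ j := fun e => hne (by rw [← hi, ← hj, e])
    refine hNS {i, j} ⟨i, Finset.mem_insert_self _ _⟩ ?_ ?_
    · have := Finset.card_insert_le i ({j} : Finset (Fin n))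
      simp only [Finset.card_singleton] at this
      omega
    · rw [Finset.sum_pair hij, hi, hj]
      exact hzw
  by_cases hn8 : n < 8
  · interval_cases n
    · calc (Finset.univ.image g).card ≤ (Finset.univ : Finset (ZMod 3)).card :=
            Finset.card_le_univ _
        _ ≤ 3 := by rw [Finset.card_univ, ZMod.card]
    · have h0 := h0img (by omega)
      have hsub : Finset.univ.image g ⊆ (Finset.univ : Finset (ZMod 4)).erase 0 := by
        intro z hz
        exact Finset.mem_erase.2 ⟨fun e => h0 (e ▸ hz), Finset.mem_univ z⟩
      calc (Finset.univ.image g).card ≤ ((Finset.univ : Finset (ZMod 4)).erase 0).card :=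
            Finset.card_le_card hsub
        _ ≤ 3 := by
          rw [Finset.card_erase_of_mem (Finset.mem_univ _), Finset.card_univ, ZMod.card]
    · have key : ∀ s : Finset (ZMod 5), 0 ∉ s →
          (∀ z ∈ s, ∀ w ∈ s, z + w = 0 → z = w) → s.card ≤ 3 := by decide
      exact key _ (h0img (by omega)) (hpair (by omega))
    · have key : ∀ s : Finset (ZMod 6), 0 ∉ s →
          (∀ z ∈ s, ∀ w ∈ s, z + w = 0 → z = w) → s.card ≤ 3 := by decide
      exact key _ (h0img (by omega)) (hpair (by omega))
    · have key : ∀ s : Finset (ZMod 7), 0 ∉ s →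
          (∀ z ∈ s, ∀ w ∈ s, z + w = 0 → z = w) → s.card ≤ 3 := by decide
      exact key _ (h0img (by omega)) (hpair (by omega))
  · push_neg at hn8
    haveI : NeZero n := ⟨by omega⟩
    set V := T.image g with hV
    have hVne : V.Nonempty := hTne.image g
    have hV1 : V.card ≠ 1 := by
      intro h1
      obtain ⟨x, hx⟩ := Finset.card_eq_one.1 h1
      have hvx : ∀ j ∈ T, g j = x := by
        intro j hj
        have : g j ∈ V := Finset.mem_image_of_mem g hj
        rw [hx, Finset.mem_singleton] at this
        exact this
      have hsum : (T.card : ℕ) • x = 0 := by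
        rw [← Stmt2Full.sum_const_val g T x hvx]
        exact hTsum
      have hnx : (n : ℕ) • x = 0 := by
        simp [nsmul_eq_mul, ZMod.natCast_self]
      have hsum2 : (n - 2) • x = 0 := by rw [← hTcard]; exact hsum
      have h2x : (2 : ℕ) • x = 0 := by
        have hsplit : (n : ℕ) • x = (n - 2) • x + 2 • x := by
          rw [← add_nsmul]
          congr 1
          omega
        rw [hsplit, hsum2, zero_add] at hnx
        exact hnx
      obtain ⟨A, hA, hA2⟩ := Finset.exists_subset_card_eq (s := T) (n := 2) (by omega)
      refine hNS A (Finset.card_pos.1 (by omega)) (by omega) ?_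
      rw [Stmt2Full.sum_const_val g A x (fun i hi => hvx i (hA hi)), hA2]
      exact h2x
    have hV3 : ¬ 3 ≤ V.card := by
      intro h3
      obtain ⟨W, hWV, hW3⟩ := Finset.exists_subset_card_eq h3
      obtain ⟨a, b, c, hab, hac, hbc, hWe⟩ := Finset.card_eq_three.1 hW3
      have hma : a ∈ V := hWV (by rw [hWe]; simp)
      have hmb : b ∈ V := hWV (by rw [hWe]; simp)
      have hmc : c ∈ V := hWV (by rw [hWe]; simp)
      exact Stmt2Full.no_three hn8 g hNS T hTcard a b c hma hmb hmc hab hac hbc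
    have hV2 : V.card = 2 := by
      have h1 : 1 ≤ V.card := Finset.card_pos.2 hVne
      omega
    obtain ⟨x, y, hxy, hVxy⟩ := Finset.card_eq_two.1 hV2
    have hval : ∀ j ∈ T, g j = x ∨ g j = y := by
      intro j hj
      have : g j ∈ V := Finset.mem_image_of_mem g hj
      rw [hVxy] at this
      simpa using this
    have hxm : x ∈ T.image g := by rw [← hV, hVxy]; simp
    have hym : y ∈ T.image g := by rw [← hV, hVxy]; simp
    rcases le_total ((T.filter (fun j => g j = y)).card) ((T.filter (fun j => g j = x)).card)
      with hc | hc
    · exact Stmt2Full.main_two hn8 g hNS T hTcard hTsum x y hxy hval hym hc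
    · exact Stmt2Full.main_two hn8 g hNS T hTcard hTsum y x hxy.symm
        (fun j hj => (hval j hj).symm) hxm hc
end

section
/- Let n be a positive integer, let s ∈ {0, 1, ..., n-1}, and let S = (g_1, ..., g_n) be a sequence of n elements of the cyclic group Z_n with MZ(S) = n - s. Then the number of distinct elements appearing in S is at most s + 1. -/
open Finset

/-- The set of subset sums over nonempty subsets of `W`. -/
private def SZ (n : ℕ) (g : Fin n → ZMod n) (W : Finset (Fin n)) : Finset (ZMod n) :=
  (W.powerset.filter fun T => T.Nonempty).image fun T => ∑ i ∈ T, g i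

private lemma mem_SZ {n : ℕ} {g : Fin n → ZMod n} {W : Finset (Fin n)} {y : ZMod n} :
    y ∈ SZ n g W ↔ ∃ T : Finset (Fin n), T ⊆ W ∧ T.Nonempty ∧ ∑ i ∈ T, g i = y := by
  simp only [SZ, Finset.mem_image, Finset.mem_filter, Finset.mem_powerset]
  tauto

private lemma SZ_mono {n : ℕ} {g : Fin n → ZMod n} {W W' : Finset (Fin n)} (h : W' ⊆ W) :
    SZ n g W' ⊆ SZ n g W := by
  intro y hy
  rcases mem_SZ.mp hy with ⟨T, hTW, hTne, hTs⟩
  exact mem_SZ.mpr ⟨T, hTW.trans h, hTne, hTs⟩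

/-- Removing an element from a zero-sum-free index set decreases the number of
subset sums by at least one. -/
private lemma SZ_gain {n : ℕ} (hn : 0 < n) {g : Fin n → ZMod n} {W : Finset (Fin n)}
    {x : Fin n} (hx : x ∈ W)
    (hzsf : ∀ T : Finset (Fin n), T ⊆ W → T.Nonempty → ∑ i ∈ T, g i ≠ 0) :
    (SZ n g (W.erase x)).card + 1 ≤ (SZ n g W).card := by
  have hsub : SZ n g (W.erase x) ⊆ SZ n g W := SZ_mono (Finset.erase_subset x W)
  by_contra hcard
  have heq : SZ n g (W.erase x) = SZ n g W :=
    Finset.eq_of_subset_of_card_le hsub (by omega)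
  have hstep : ∀ j : ℕ, (j + 1) • g x ∈ SZ n g (W.erase x) := by
    intro j
    induction j with
    | zero =>
      rw [heq]
      refine mem_SZ.mpr ⟨{x}, Finset.singleton_subset_iff.mpr hx,
        ⟨x, Finset.mem_singleton_self x⟩, ?_⟩
      simp
    | succ j ih =>
      rcases mem_SZ.mp ih with ⟨T, hTW, hTne, hTs⟩
      have hxT : x ∉ T := fun hmem => (Finset.mem_erase.mp (hTW hmem)).1 rfl
      rw [heq]
      refine mem_SZ.mpr ⟨insert x T, ?_, ⟨x, Finset.mem_insert_self x T⟩, ?_⟩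
      · intro i hi
        rcases Finset.mem_insert.mp hi with h | h
        · exact h ▸ hx
        · exact Finset.erase_subset x W (hTW h)
      · rw [Finset.sum_insert hxT, hTs, succ_nsmul (g x) (j+1)]
        exact add_comm _ _
  have hmem := hstep (n - 1)
  rw [show n - 1 + 1 = n from by omega] at hmem
  rw [show n • g x = 0 from by rw [nsmul_eq_mul]; simp] at hmem
  rcases mem_SZ.mp hmem with ⟨T, hTW, hTne, hTs⟩
  exact hzsf T (hTW.trans (Finset.erase_subset x W)) hTne hTs

/-- Chain version: going from a subset `V` up to `W` gains at least the cardinality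
difference. -/
private lemma SZ_chain {n : ℕ} (hn : 0 < n) {g : Fin n → ZMod n} :
    ∀ (d : ℕ) (W V : Finset (Fin n)), V ⊆ W → W.card = V.card + d →
    (∀ T : Finset (Fin n), T ⊆ W → T.Nonempty → ∑ i ∈ T, g i ≠ 0) →
    (SZ n g V).card + d ≤ (SZ n g W).card := by
  intro d
  induction d with
  | zero =>
    intro W V hVW hcard _
    have hVW' : V = W := Finset.eq_of_subset_of_card_le hVW (by omega)
    simp [hVW']
  | succ d ih =>
    intro W V hVW hcard hzsf
    have hne : V ≠ W := by intro h; rw [h] at hcard; omega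
    obtain ⟨x, hxW, hxV⟩ := Finset.exists_of_ssubset (hVW.ssubset_of_ne hne)
    have hVe : V ⊆ W.erase x := Finset.subset_erase.mpr ⟨hVW, hxV⟩
    have hce : (W.erase x).card = V.card + d := by
      rw [Finset.card_erase_of_mem hxW]; omega
    have h1 := ih (W.erase x) V hVe hce
      (fun T hT hTne => hzsf T (hT.trans (Finset.erase_subset x W)) hTne)
    have h2 := SZ_gain hn hxW hzsf
    omega

/-- In `ZMod n` there is at most one element of order two. -/
private lemma two_torsion_unique {n : ℕ} (hn : 0 < n) {u v : ZMod n}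
    (hu : u ≠ 0) (hv : v ≠ 0) (h2u : u + u = 0) (h2v : v + v = 0) : u = v := by
  haveI : NeZero n := ⟨hn.ne'⟩
  have key : ∀ w : ZMod n, w ≠ 0 → w + w = 0 → w.val + w.val = n := by
    intro w hw h2
    have hcast : ((w.val + w.val : ℕ) : ZMod n) = 0 := by
      push_cast
      rw [ZMod.natCast_val, ZMod.cast_id]
      exact h2
    have hdvd : n ∣ w.val + w.val := (ZMod.natCast_eq_zero_iff _ _).mp hcast
    have hlt : w.val < n := ZMod.val_lt w
    have hpos : 0 < w.val := Nat.pos_of_ne_zero (fun h => hw (by rwa [← ZMod.val_eq_zero]))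
    rcases hdvd with ⟨c, hc⟩
    have h2n : n * c < n * 2 := by rw [← hc]; omega
    have hc2 : c < 2 := Nat.lt_of_mul_lt_mul_left h2n
    have hc0 : c ≠ 0 := by rintro rfl; omega
    have hc1 : c = 1 := by omega
    rw [hc1, mul_one] at hc
    exact hc
  have h1 := key u hu h2u
  have h2 := key v hv h2v
  have hval : u.val = v.val := by omega
  calc u = ((u.val : ℕ) : ZMod n) := by rw [ZMod.natCast_val, ZMod.cast_id]
    _ = ((v.val : ℕ) : ZMod n) := by rw [hval]
    _ = v := by rw [ZMod.natCast_val, ZMod.cast_id]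

/-- A zero-sum-free set of indices with pairwise distinct values has at least
`2k - 1` distinct subset sums. -/
private lemma SZ_set_bound {n : ℕ} (hn : 0 < n) {g : Fin n → ZMod n} {V : Finset (Fin n)}
    (hinj : Set.InjOn g ↑V) (hk : 2 ≤ V.card)
    (hzsf : ∀ T : Finset (Fin n), T ⊆ V → T.Nonempty → ∑ i ∈ T, g i ≠ 0) :
    2 * V.card ≤ (SZ n g V).card + 1 := by
  classical
  set σ := ∑ i ∈ V, g i with hσ
  set A := V.image g with hA
  set B := V.image (fun i => σ - g i) with hB
  have hVne : V.Nonempty := Finset.card_pos.mp (by omega)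
  have hcardA : A.card = V.card := Finset.card_image_of_injOn hinj
  have hcardB : B.card = V.card := by
    apply Finset.card_image_of_injOn
    intro i hi j hj hij
    exact hinj hi hj (sub_right_injective hij)
  have hAS : A ⊆ SZ n g V := by
    intro y hy
    rcases Finset.mem_image.mp hy with ⟨i, hi, rfl⟩
    exact mem_SZ.mpr ⟨{i}, Finset.singleton_subset_iff.mpr hi, ⟨i, Finset.mem_singleton_self i⟩,
      by simp⟩
  have hBS : B ⊆ SZ n g V := by
    intro y hy
    rcases Finset.mem_image.mp hy with ⟨i, hi, rfl⟩
    refine mem_SZ.mpr ⟨V.erase i, Finset.erase_subset i V, ?_, ?_⟩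
    · rw [← Finset.card_pos, Finset.card_erase_of_mem hi]; omega
    · rw [Finset.sum_erase_eq_sub hi]
  have hσS : σ ∈ SZ n g V := mem_SZ.mpr ⟨V, Finset.Subset.refl V, hVne, rfl⟩
  have hσA : σ ∉ A := by
    intro h
    rcases Finset.mem_image.mp h with ⟨i, hi, hgi⟩
    apply hzsf (V.erase i) (Finset.erase_subset i V)
      (by rw [← Finset.card_pos, Finset.card_erase_of_mem hi]; omega)
    rw [Finset.sum_erase_eq_sub hi, hgi, sub_self]
  have hσB : σ ∉ B := by
    intro h
    rcases Finset.mem_image.mp h with ⟨i, hi, hgi⟩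
    have hgi0 : g i = 0 := by rwa [sub_eq_self] at hgi
    exact hzsf {i} (Finset.singleton_subset_iff.mpr hi) ⟨i, Finset.mem_singleton_self i⟩
      (by simpa using hgi0)
  have hABcap : (A ∩ B).card ≤ 2 := by
    by_contra hcap
    push_neg at hcap
    have hk3 : 3 ≤ V.card := by
      have := Finset.card_le_card (Finset.inter_subset_left (s₁ := A) (s₂ := B))
      omega
    have hxx : ∀ x ∈ A ∩ B, x + x = σ := by
      intro x hx
      rcases Finset.mem_image.mp (Finset.mem_inter.mp hx).1 with ⟨i, hi, hgi⟩
      rcases Finset.mem_image.mp (Finset.mem_inter.mp hx).2 with ⟨j, hj, hgj⟩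
      by_cases hij : i = j
      · subst hij
        linear_combination -hgj - hgi
      · exfalso
        have hji : j ∈ V.erase i := Finset.mem_erase.mpr ⟨fun h => hij h.symm, hj⟩
        apply hzsf ((V.erase i).erase j)
          ((Finset.erase_subset _ _).trans (Finset.erase_subset _ _))
        · rw [← Finset.card_pos, Finset.card_erase_of_mem hji, Finset.card_erase_of_mem hi]
          omega
        · have hj2 : g j = σ - x := by rw [← hgj]; ring
          rw [Finset.sum_erase_eq_sub hji, Finset.sum_erase_eq_sub hi, hgi, hj2]
          ring
    obtain ⟨x, y, z, hx, hy, hz, hxy, hxz, hyz⟩ := Finset.two_lt_card_iff.mp hcap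
    have h1 : (x - y) + (x - y) = 0 := by
      have ex := hxx x hx
      have ey := hxx y hy
      have hcalc : (x - y) + (x - y) = (x + x) - (y + y) := by ring
      rw [hcalc, ex, ey, sub_self]
    have h2 : (x - z) + (x - z) = 0 := by
      have ex := hxx x hx
      have ez := hxx z hz
      have hcalc : (x - z) + (x - z) = (x + x) - (z + z) := by ring
      rw [hcalc, ex, ez, sub_self]
    have hne1 : x - y ≠ 0 := sub_ne_zero.mpr hxy
    have hne2 : x - z ≠ 0 := sub_ne_zero.mpr hxz
    have heq := two_torsion_unique hn hne1 hne2 h1 h2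
    exact hyz (sub_right_injective heq)
  have hcup : insert σ (A ∪ B) ⊆ SZ n g V := by
    intro y hy
    rcases Finset.mem_insert.mp hy with rfl | hy
    · exact hσS
    · rcases Finset.mem_union.mp hy with h | h
      exacts [hAS h, hBS h]
  have hcard1 : (insert σ (A ∪ B)).card = (A ∪ B).card + 1 :=
    Finset.card_insert_of_notMem (by
      intro h
      rcases Finset.mem_union.mp h with h | h
      exacts [hσA h, hσB h])
  have hcard2 : (A ∪ B).card + (A ∩ B).card = A.card + B.card :=
    Finset.card_union_add_card_inter A B
  have hle := Finset.card_le_card hcup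
  omega

/-- Main theorem: if `S` is a sequence of `n` elements of `ℤ/nℤ` (`n ≥ 1`) with
`MZ(S) = n - s` for some `s ∈ {0, ..., n-1}`, then `S` has at most `s + 1`
distinct elements. -/
theorem stmt_3 (n s : ℕ) (hn : 0 < n) (hs : s ≤ n - 1) (g : Fin n → ZMod n)
    (hMZ : IsLeast {m : ℕ | ∃ T : Finset (Fin n),
      T.Nonempty ∧ ∑ i ∈ T, g i = 0 ∧ T.card = m} (n - s)) :
    (Finset.univ.image g).card ≤ s + 1 := by
  classical
  haveI : NeZero n := ⟨hn.ne'⟩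
  by_contra hcon
  push_neg at hcon
  set A := (Finset.univ.image g) with hAdef
  set k := A.card with hkdef
  have hkn : k ≤ n := by
    calc k ≤ (Finset.univ : Finset (Fin n)).card := Finset.card_image_le
      _ = n := by simp
  have key : ∀ T : Finset (Fin n), T.Nonempty → T.card + s < n → ∑ i ∈ T, g i ≠ 0 := by
    intro T hT hc h0
    have hm : n - s ≤ T.card := hMZ.2 ⟨T, hT, h0, rfl⟩
    omega
  have hs2 : s + 2 ≤ k := by omega
  by_cases hcase : 2 * k ≤ n + 1
  · -- few distinct values relative to n : counting subset sums
    have hsec : ∀ a ∈ A, ∃ i, g i = a := by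
      intro a ha
      rcases Finset.mem_image.mp ha with ⟨i, _, h⟩
      exact ⟨i, h⟩
    set f : ZMod n → Fin n := fun a => if h : ∃ i, g i = a then h.choose else ⟨0, hn⟩ with hfdef
    have hf : ∀ a ∈ A, g (f a) = a := by
      intro a ha
      rcases hsec a ha with ⟨i, hi⟩
      have hex : ∃ i, g i = a := ⟨i, hi⟩
      simp only [hfdef, dif_pos hex]
      exact hex.choose_spec
    set V := A.image f with hVdef
    have hVcard : V.card = k := by
      rw [hVdef]
      apply Finset.card_image_of_injOn
      intro a ha b hb hfab
      rw [← hf a ha, ← hf b hb, hfab]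
    have hinj : Set.InjOn g ↑V := by
      intro i hi j hj hgij
      rw [Finset.mem_coe, hVdef, Finset.mem_image] at hi hj
      rcases hi with ⟨a, ha, rfl⟩
      rcases hj with ⟨b, hb, rfl⟩
      rw [hf a ha, hf b hb] at hgij
      rw [hgij]
    obtain ⟨W, hVW, hWcard⟩ := Finset.exists_superset_card_eq
      (s := V) (n := n + 1 - k) (by omega) (by simp; omega)
    have hzsfW : ∀ T : Finset (Fin n), T ⊆ W → T.Nonempty → ∑ i ∈ T, g i ≠ 0 := by
      intro T hTW hTne
      apply key T hTne
      have := Finset.card_le_card hTW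
      omega
    have hchain := SZ_chain hn ((n + 1 - k) - k) W V hVW (by omega)
      hzsfW
    have hset := SZ_set_bound hn hinj (by omega)
      (fun T hTV hTne => hzsfW T (hTV.trans hVW) hTne)
    have hSZsub : SZ n g W ⊆ Finset.univ.erase (0 : ZMod n) := by
      intro y hy
      rcases mem_SZ.mp hy with ⟨T, hTW, hTne, hTs⟩
      refine Finset.mem_erase.mpr ⟨?_, Finset.mem_univ y⟩
      rintro rfl
      exact hzsfW T hTW hTne hTs
    have hSZcard : (SZ n g W).card ≤ n - 1 := by
      have hle := Finset.card_le_card hSZsub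
      rwa [Finset.card_erase_of_mem (Finset.mem_univ _), Finset.card_univ, ZMod.card] at hle
    omega
  · -- many distinct values : pairing x, -x
    push_neg at hcase
    have h0A : (0 : ZMod n) ∉ A := by
      intro h0
      rcases Finset.mem_image.mp h0 with ⟨i, _, hi⟩
      refine key {i} ⟨i, Finset.mem_singleton_self i⟩ ?_ (by simpa using hi)
      rw [Finset.card_singleton]; omega
    have hkn' : k ≤ n - 1 := by
      by_contra h
      have hkeq : k = n := by omega
      have hA : A = Finset.univ := Finset.eq_univ_of_card A (by rw [← hkdef, hkeq, ZMod.card])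
      exact h0A (hA ▸ Finset.mem_univ (0 : ZMod n))
    set N := A.image (fun x => -x) with hNdef
    have hNcard : N.card = k := Finset.card_image_of_injective A neg_injective
    have hAsub : A ⊆ Finset.univ.erase (0 : ZMod n) := fun x hx =>
      Finset.mem_erase.mpr ⟨fun h => h0A (h ▸ hx), Finset.mem_univ x⟩
    have hNsub : N ⊆ Finset.univ.erase (0 : ZMod n) := by
      intro x hx
      rcases Finset.mem_image.mp hx with ⟨a, ha, rfl⟩
      refine Finset.mem_erase.mpr ⟨?_, Finset.mem_univ _⟩
      simp only [ne_eq, neg_eq_zero]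
      intro h
      exact h0A (h ▸ ha)
    have hunion : (A ∪ N).card ≤ n - 1 := by
      have hle := Finset.card_le_card (Finset.union_subset hAsub hNsub)
      rwa [Finset.card_erase_of_mem (Finset.mem_univ _), Finset.card_univ, ZMod.card] at hle
    have hui : (A ∪ N).card + (A ∩ N).card = A.card + N.card :=
      Finset.card_union_add_card_inter A N
    have hinter : 1 < (A ∩ N).card := by omega
    obtain ⟨x, hx, y, hy, hxy⟩ := Finset.one_lt_card.mp hinter
    have hmemne : ∀ w ∈ A ∩ N, w ≠ 0 :=
      fun w hw => (Finset.mem_erase.mp (hAsub (Finset.mem_inter.mp hw).1)).1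
    have hw : ∃ w ∈ A ∩ N, w ≠ -w := by
      by_contra hall
      push_neg at hall
      have hxx : x + x = 0 := by
        nth_rewrite 2 [hall x hx]
        exact add_neg_cancel x
      have hyy : y + y = 0 := by
        nth_rewrite 2 [hall y hy]
        exact add_neg_cancel y
      exact hxy (two_torsion_unique hn (hmemne x hx) (hmemne y hy) hxx hyy)
    obtain ⟨w, hwAN, hwne⟩ := hw
    rcases Finset.mem_image.mp (Finset.mem_inter.mp hwAN).1 with ⟨i, _, hgi⟩
    rcases Finset.mem_image.mp (Finset.mem_inter.mp hwAN).2 with ⟨a, haA, hna⟩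
    rcases Finset.mem_image.mp haA with ⟨j, _, hgj⟩
    have hgjw : g j = -w := by rw [hgj, ← hna, neg_neg]
    have hij : i ≠ j := by
      intro h
      rw [h, hgjw] at hgi
      exact hwne hgi.symm
    refine key {i, j} ⟨i, Finset.mem_insert_self i {j}⟩ ?_ ?_
    · rw [Finset.card_pair hij]; omega
    · rw [Finset.sum_pair hij, hgi, hgjw, add_neg_cancel]
end

section
/- Let G be a finite abelian group, let P = (g_1, ..., g_k) be a sequence over G, let g_{k+1} ∈ G, and let S = (g_1, ..., g_k, g_{k+1}) be the sequence obtained by appending g_{k+1} to P. If 0 is not a subsequence sum of S (i.e., S has no nonempty zero-sum subsequence), then |Σ(S)| ≥ |Σ(P)| + 1. -/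
/-- Lemma: if `S = (g_1, ..., g_{k+1})` has no nonempty zero-sum subsequence and
`P = (g_1, ..., g_k)`, then `|Σ(S)| ≥ |Σ(P)| + 1`. -/
theorem stmt_4 {G : Type*} [AddCommGroup G] [Fintype G] (k : ℕ)
    (g : Fin (k + 1) → G)
    (h0 : ∀ T : Finset (Fin (k + 1)), T.Nonempty → ∑ i ∈ T, g i ≠ 0) :
    Set.ncard {x : G | ∃ T : Finset (Fin k),
        T.Nonempty ∧ ∑ i ∈ T, g i.castSucc = x} + 1 ≤
      Set.ncard {x : G | ∃ T : Finset (Fin (k + 1)),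
        T.Nonempty ∧ ∑ i ∈ T, g i = x} := by
  classical
  set B := {x : G | ∃ T : Finset (Fin k),
      T.Nonempty ∧ ∑ i ∈ T, g i.castSucc = x} with hB
  set A := {x : G | ∃ T : Finset (Fin (k + 1)),
      T.Nonempty ∧ ∑ i ∈ T, g i = x} with hA
  have hfinA : A.Finite := Set.toFinite A
  have hfinB : B.Finite := Set.toFinite B
  have hBA : B ⊆ A := by
    rintro x ⟨T, hT, rfl⟩
    exact ⟨T.map Fin.castSuccEmb, hT.map, by rw [Finset.sum_map]; rfl⟩
  have hglast : g (Fin.last k) ∈ A :=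
    ⟨{Fin.last k}, Finset.singleton_nonempty _, by simp⟩
  have hstep : ∀ x ∈ B, x + g (Fin.last k) ∈ A := by
    rintro x ⟨T, hT, rfl⟩
    refine ⟨insert (Fin.last k) (T.map Fin.castSuccEmb), Finset.insert_nonempty _ _, ?_⟩
    rw [Finset.sum_insert (by
      simp only [Finset.mem_map]
      rintro ⟨i, _, hi⟩
      exact absurd hi (Fin.castSucc_lt_last i).ne)]
    rw [Finset.sum_map]
    exact add_comm _ _
  have hne : B ≠ A := by
    intro hEq
    have hmaps : Set.MapsTo (· + g (Fin.last k)) B B := by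
      intro x hx
      have := hstep x hx
      rwa [← hEq] at this
    have hinj : Set.InjOn (· + g (Fin.last k)) B :=
      (add_left_injective _).injOn
    have hbij := (hfinB.injOn_iff_bijOn_of_mapsTo hmaps).mp hinj
    have hsurj := hbij.surjOn
    have hgB : g (Fin.last k) ∈ B := hEq ▸ hglast
    obtain ⟨b, hbB, hb⟩ := hsurj hgB
    have hb0 : b = 0 := by
      have : b + g (Fin.last k) = g (Fin.last k) := hb
      simpa using this
    subst hb0
    obtain ⟨T, hT, hsum⟩ := hBA hbB
    exact h0 T hT hsum
  have hss : B ⊂ A := ⟨hBA, fun h => hne (le_antisymm hBA h)⟩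
  exact Set.ncard_lt_ncard hss hfinA
end

section
/- Let G be a finite abelian group and let S = (g_1, ..., g_k) be a sequence of k elements of G such that 0 is not a subsequence sum of S (i.e., S has no nonempty zero-sum subsequence). Then |Σ(S)| ≥ k. -/
/-- Lemma: if `S = (g_1, ..., g_k)` has no nonempty zero-sum subsequence,
then `|Σ(S)| ≥ k`. -/
theorem stmt_5 {G : Type*} [AddCommGroup G] [Fintype G] (k : ℕ) (g : Fin k → G)
    (h0 : ∀ T : Finset (Fin k), T.Nonempty → ∑ i ∈ T, g i ≠ 0) :
    k ≤ Set.ncard {x : G | ∃ T : Finset (Fin k),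
      T.Nonempty ∧ ∑ i ∈ T, g i = x} := by
  set f : Fin k → G := fun j => ∑ i ∈ Finset.Iic j, g i with hf
  have hinj : Function.Injective f := by
    intro a b hab
    by_contra hne
    wlog hlt : a < b generalizing a b
    · exact this hab.symm (Ne.symm hne) (lt_of_le_of_ne (not_lt.mp hlt) (Ne.symm hne))
    have hsub : Finset.Iic a ⊆ Finset.Iic b := Finset.Iic_subset_Iic.mpr hlt.le
    have hzero : ∑ i ∈ Finset.Iic b \ Finset.Iic a, g i = 0 := by
      rw [Finset.sum_sdiff_eq_sub hsub]
      simp only [hf] at hab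
      rw [hab, sub_self]
    have hne' : (Finset.Iic b \ Finset.Iic a).Nonempty :=
      ⟨b, Finset.mem_sdiff.mpr ⟨Finset.mem_Iic.mpr le_rfl, by simp [hlt.not_ge]⟩⟩
    exact h0 _ hne' hzero
  have hsubset : Set.range f ⊆ {x : G | ∃ T : Finset (Fin k),
      T.Nonempty ∧ ∑ i ∈ T, g i = x} := by
    rintro x ⟨j, rfl⟩
    exact ⟨Finset.Iic j, ⟨j, Finset.mem_Iic.mpr le_rfl⟩, rfl⟩
  have hfin : {x : G | ∃ T : Finset (Fin k), T.Nonempty ∧ ∑ i ∈ T, g i = x}.Finite :=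
    Set.toFinite _
  calc k = (Set.range f).ncard := by
        rw [← Nat.card_coe_set_eq, Nat.card_range_of_injective hinj, Nat.card_eq_fintype_card, Fintype.card_fin]
    _ ≤ _ := Set.ncard_le_ncard hsubset hfin
end

section
/- Let n be a positive integer and let S = (g_1, ..., g_n) be a sequence of n elements of the cyclic group Z_n whose number of distinct elements is s. Then S contains a nonempty zero-sum subsequence of length at most n - s + 1. -/
/-- Corollary: a sequence of `n` elements of `ℤ/nℤ` with `s` distinct elements
contains a nonempty zero-sum subsequence of length at most `n - s + 1`. -/
theorem stmt_6 (n s : ℕ) (hn : 0 < n) (g : Fin n → ZMod n)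
    (hsupp : (Finset.univ.image g).card = s) :
    ∃ T : Finset (Fin n), T.Nonempty ∧ ∑ i ∈ T, g i = 0 ∧ T.card ≤ n - s + 1 := by
  haveI : NeZero n := ⟨hn.ne'⟩
  classical
  have hsn : s ≤ n := by
    rw [← hsupp]
    calc (Finset.univ.image g).card ≤ Finset.univ.card := Finset.card_image_le
      _ = n := by simp
  -- a transversal D : one preimage for each value of g
  obtain ⟨D, hDinj, hDim⟩ : ∃ D : Finset (Fin n), Set.InjOn g D ∧
      D.image g = Finset.univ.image g := by
    refine ⟨(Finset.univ.image g).attach.image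
      (fun v => (Finset.mem_image.mp v.2).choose), ?_, ?_⟩
    · intro a ha b hb hab
      simp only [Finset.coe_image, Set.mem_image] at ha hb
      obtain ⟨va, -, rfl⟩ := ha
      obtain ⟨vb, -, rfl⟩ := hb
      have ha' := (Finset.mem_image.mp va.2).choose_spec.2
      have hb' := (Finset.mem_image.mp vb.2).choose_spec.2
      have : va = vb := Subtype.ext (by rw [← ha', ← hb', hab])
      rw [this]
    · apply Finset.Subset.antisymm
      · intro v hv
        obtain ⟨a, -, rfl⟩ := Finset.mem_image.mp hv
        exact Finset.mem_image_of_mem g (Finset.mem_univ a)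
      · intro v hv
        refine Finset.mem_image.mpr ⟨(Finset.mem_image.mp hv).choose, ?_,
          (Finset.mem_image.mp hv).choose_spec.2⟩
        exact Finset.mem_image.mpr ⟨⟨v, hv⟩, Finset.mem_attach _ _, rfl⟩
  have hDcard : D.card = s := by
    rw [← hsupp, ← hDim, Finset.card_image_of_injOn hDinj]
  -- the rest of the indices, listed
  set R : Finset (Fin n) := Dᶜ with hR
  have hRcard : R.card = n - s := by
    rw [hR, Finset.card_compl, hDcard, Fintype.card_fin]
  set l : List (Fin n) := R.sort (· ≤ ·) with hl
  have hlnodup : l.Nodup := R.sort_nodup _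
  have hllen : l.length = n - s := by rw [hl, Finset.length_sort, hRcard]
  have hlmem : ∀ a ∈ l, a ∈ R := fun a ha => (Finset.mem_sort _).mp ha
  set σ : ℕ → ZMod n := fun k => ((l.take k).map g).sum with hσ
  have key : ∀ i j : ℕ, i ≤ j →
      σ j = σ i + (((l.drop i).take (j - i)).map g).sum := by
    intro i j hij
    have : l.take j = l.take i ++ (l.drop i).take (j - i) := by
      rw [← List.take_add, Nat.add_sub_cancel' hij]
    rw [hσ]
    simp only [this, List.map_append, List.sum_append]
  by_cases h1 : ∃ i j : ℕ, i < j ∧ j ≤ n - s ∧ σ i = σ j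
  · obtain ⟨i, j, hij, hjle, heq⟩ := h1
    have hsub : ((l.drop i).take (j - i)).Sublist l :=
      (List.take_sublist _ _).trans (List.drop_sublist _ _)
    have hnd : ((l.drop i).take (j - i)).Nodup := hsub.nodup hlnodup
    have hlen : ((l.drop i).take (j - i)).length = j - i := by
      rw [List.length_take, List.length_drop, hllen]
      omega
    refine ⟨((l.drop i).take (j - i)).toFinset, ?_, ?_, ?_⟩
    · rw [← Finset.card_pos, List.toFinset_card_of_nodup hnd, hlen]
      omega
    · rw [List.sum_toFinset _ hnd]
      have h2 := key i j hij.le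
      rw [← heq] at h2
      exact left_eq_add.mp h2

    · rw [List.toFinset_card_of_nodup hnd, hlen]; omega
  by_cases h2 : ∃ i ≤ n - s, ∃ d ∈ D, σ (n - s) + g d = σ i
  · obtain ⟨i, hile, d, hd, heq⟩ := h2
    have hnd : (l.drop i).Nodup := (List.drop_sublist _ _).nodup hlnodup
    have hdnot : d ∉ (l.drop i).toFinset := by
      intro hmem
      have := hlmem d ((List.drop_sublist _ _).subset (List.mem_toFinset.mp hmem))
      rw [hR, Finset.mem_compl] at this
      exact this hd
    have hdropsum : σ (n - s) = σ i + ((l.drop i).map g).sum := by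
      have := key i (n - s) hile
      rwa [List.take_of_length_le (by rw [List.length_drop, hllen])] at this
    refine ⟨insert d (l.drop i).toFinset, Finset.insert_nonempty _ _, ?_, ?_⟩
    · rw [Finset.sum_insert hdnot, List.sum_toFinset _ hnd]
      have : g d + ((l.drop i).map g).sum = g d + (σ (n - s) - σ i) := by
        rw [hdropsum]; ring
      rw [this, ← heq]; ring
    · calc (insert d (l.drop i).toFinset).card ≤ (l.drop i).toFinset.card + 1 :=
          Finset.card_insert_le _ _
        _ ≤ n - s + 1 := by
          rw [List.toFinset_card_of_nodup hnd, List.length_drop, hllen]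
          omega
  -- no collisions: pigeonhole contradiction
  exfalso
  push_neg at h1 h2
  set A : Finset (ZMod n) := (Finset.range (n - s + 1)).image σ with hA
  set B : Finset (ZMod n) := D.image (fun d => σ (n - s) + g d) with hB
  have hAcard : A.card = n - s + 1 := by
    rw [hA, Finset.card_image_of_injOn, Finset.card_range]
    intro i hi j hj hij
    simp only [Finset.coe_range, Set.mem_Iio] at hi hj
    by_contra hne
    rcases lt_or_gt_of_ne hne with h | h
    · exact h1 i j h (by omega) hij
    · exact h1 j i h (by omega) hij.symm
  have hBcard : B.card = s := by
    rw [hB, Finset.card_image_of_injOn, hDcard]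
    intro a ha b hb hab
    exact hDinj ha hb (by exact add_left_cancel hab)
  have hdisj : Disjoint A B := by
    rw [Finset.disjoint_left]
    intro x hx hx'
    obtain ⟨i, hi, rfl⟩ := Finset.mem_image.mp hx
    obtain ⟨d, hd, heq⟩ := Finset.mem_image.mp hx'
    rw [Finset.mem_range] at hi
    exact h2 i (by omega) d hd heq
  have hcard : (A ∪ B).card = n + 1 := by
    rw [Finset.card_union_of_disjoint hdisj, hAcard, hBcard]
    omega
  have : (A ∪ B).card ≤ n := by
    calc (A ∪ B).card ≤ Fintype.card (ZMod n) := Finset.card_le_univ _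
      _ = n := ZMod.card n
  omega
end

section
/- Let n ≥ 4 be an integer and let S = (g_1, ..., g_n) be a sequence of n elements of the cyclic group Z_n with MZ(S) = n - 1. Then, after reordering, there exists a ∈ Z_n of order n such that g_1 = g_2 = ... = g_{n-1} = a and g_n = 2a. -/
open Finset

lemma keyA {n : ℕ} (hn : 4 ≤ n) (g : Fin n → ZMod n)
    (hz0 : ∀ A : Finset (Fin n), A.Nonempty → A.card ≤ n - 2 → ∑ p ∈ A, g p ≠ 0)
    {T : Finset (Fin n)} (hTcard : T.card = n - 1)
    {i j k : Fin n} (hi : i ∈ T) (hj : j ∈ T) (hk : k ∈ T)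
    (hij : i ≠ j) (hik : i ≠ k) (hjk : j ≠ k) (hab : g i ≠ g j) :
    g k = g j ∨ g k = g j - g i := by
  haveI : NeZero n := ⟨by omega⟩
  set a := g i with ha
  set b := g j with hb
  set x := g k with hx
  have hsub : ({i, j, k} : Finset (Fin n)) ⊆ T := by
    intro p hp
    simp only [mem_insert, mem_singleton] at hp
    rcases hp with h | h | h <;> subst h <;> assumption
  have hcard3 : ({i, j, k} : Finset (Fin n)).card = 3 := by
    rw [card_insert_of_notMem (by simp [hij, hik]),
      card_insert_of_notMem (by simp [hjk]), card_singleton]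
  set R := T \ {i, j, k} with hR
  have hRcard : R.card = n - 4 := by
    rw [hR, card_sdiff_of_subset hsub, hTcard, hcard3]
    omega
  set l := R.toList with hl
  have hlnd : l.Nodup := R.nodup_toList
  have hllen : l.length = n - 4 := by rw [hl, Finset.length_toList, hRcard]
  set P : ℕ → Finset (Fin n) := fun m => (l.take m).toFinset with hP
  have hPsub : ∀ m, P m ⊆ R := by
    intro m p hp
    simp only [hP, List.mem_toFinset] at hp
    have := List.take_subset m l hp
    rwa [← Finset.mem_toList]
  have hPcard : ∀ m, m ≤ n - 4 → (P m).card = m := by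
    intro m hm
    simp only [hP]
    rw [List.toFinset_card_of_nodup (hlnd.sublist (List.take_sublist m l)),
      List.length_take, hllen]
    omega
  have hPmono : ∀ {m m' : ℕ}, m ≤ m' → P m ⊆ P m' := by
    intro m m' hmm p hp
    simp only [hP, List.mem_toFinset] at hp ⊢
    have heq : l.take m = (l.take m').take m := by
      rw [List.take_take, Nat.min_eq_left hmm]
    rw [heq] at hp
    exact List.take_subset m _ hp
  set f : ℕ → ZMod n := fun m => ∑ p ∈ P m, g p with hf
  -- disjointness
  have hnotP : ∀ m, i ∉ P m ∧ j ∉ P m ∧ k ∉ P m := by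
    intro m
    refine ⟨fun h => ?_, fun h => ?_, fun h => ?_⟩ <;>
    · have := hPsub m h
      rw [hR, mem_sdiff] at this
      simp at this
  -- basic nonzero facts
  have ha0 : a ≠ 0 := by
    have := hz0 {i} ⟨i, mem_singleton_self i⟩ (by simp; omega)
    simpa using this
  have hb0 : b ≠ 0 := by
    have := hz0 {j} ⟨j, mem_singleton_self j⟩ (by simp; omega)
    simpa using this
  have hx0 : x ≠ 0 := by
    have := hz0 {k} ⟨k, mem_singleton_self k⟩ (by simp; omega)
    simpa using this
  -- F facts
  have F1 : ∀ m, m ≤ n - 4 → b + x + f m ≠ 0 := by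
    intro m hm hzero
    have hkm : k ∉ P m := (hnotP m).2.2
    have hjm : j ∉ insert k (P m) := by
      simp [hjk, (hnotP m).2.1]
    refine hz0 (insert j (insert k (P m))) ⟨j, mem_insert_self _ _⟩ ?_ ?_
    · rw [card_insert_of_notMem hjm, card_insert_of_notMem hkm, hPcard m hm]; omega
    · rw [sum_insert hjm, sum_insert hkm]
      rw [← hzero]; ring
  have F2 : ∀ m, m ≤ n - 4 → x + f m ≠ 0 := by
    intro m hm hzero
    have hkm : k ∉ P m := (hnotP m).2.2
    refine hz0 (insert k (P m)) ⟨k, mem_insert_self _ _⟩ ?_ ?_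
    · rw [card_insert_of_notMem hkm, hPcard m hm]; omega
    · rw [sum_insert hkm]; exact hzero
  have F3 : ∀ m, m ≤ n - 4 → a + x + f m ≠ 0 := by
    intro m hm hzero
    have hkm : k ∉ P m := (hnotP m).2.2
    have him : i ∉ insert k (P m) := by
      simp [hik, (hnotP m).1]
    refine hz0 (insert i (insert k (P m))) ⟨i, mem_insert_self _ _⟩ ?_ ?_
    · rw [card_insert_of_notMem him, card_insert_of_notMem hkm, hPcard m hm]; omega
    · rw [sum_insert him, sum_insert hkm]
      rw [← hzero]; ring
  have F4 : ∀ m, m ≤ n - 4 → b + f m ≠ 0 := by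
    intro m hm hzero
    have hjm : j ∉ P m := (hnotP m).2.1
    refine hz0 (insert j (P m)) ⟨j, mem_insert_self _ _⟩ ?_ ?_
    · rw [card_insert_of_notMem hjm, hPcard m hm]; omega
    · rw [sum_insert hjm]; exact hzero
  have F5 : ∀ m m' : ℕ, m < m' → m' ≤ n - 4 → f m ≠ f m' := by
    intro m m' hmm hm' hzero
    have hPP : P m ⊆ P m' := hPmono hmm.le
    have hcard : (P m' \ P m).card = m' - m := by
      rw [card_sdiff_of_subset hPP, hPcard m (by omega), hPcard m' hm']
    refine hz0 (P m' \ P m) ?_ (by omega) ?_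
    · rw [← card_pos, hcard]; omega
    · rw [Finset.sum_sdiff_eq_sub hPP]
      simp only [hf] at hzero
      rw [← hzero]; ring
  -- the set W
  set W : Finset (ZMod n) :=
    insert a ((Finset.range (n - 3)).image (fun m => a + b + x + f m)) with hW
  have haim : a ∉ (Finset.range (n - 3)).image (fun m => a + b + x + f m) := by
    intro hmem
    obtain ⟨m, hm, hme⟩ := mem_image.mp hmem
    rw [mem_range] at hm
    exact F1 m (by omega) (by linear_combination hme)
  have himcard : ((Finset.range (n - 3)).image (fun m => a + b + x + f m)).card = n - 3 := by
    rw [Finset.card_image_of_injOn, Finset.card_range]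
    intro m hm m' hm' hee
    rw [Finset.mem_coe, mem_range] at hm hm'
    by_contra hne
    rcases Nat.lt_or_ge m m' with h | h
    · exact F5 m m' h (by omega) (by linear_combination hee)
    · exact F5 m' m (by omega) (by omega) (by linear_combination -hee)
  have hWcard : W.card = n - 2 := by
    rw [hW, card_insert_of_notMem haim, himcard]; omega
  have hWsub : W ⊆ Finset.univ \ {b, a + b} := by
    intro y hy
    rw [hW, mem_insert] at hy
    rw [mem_sdiff, mem_insert, mem_singleton]
    refine ⟨mem_univ y, ?_⟩
    rintro (rfl | rfl)
    · rcases hy with h | h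
      · exact hab h.symm
      · obtain ⟨m, hm, hme⟩ := mem_image.mp h
        rw [mem_range] at hm
        exact F3 m (by omega) (by linear_combination hme)
    · rcases hy with h | h
      · exact hb0 (by linear_combination h)
      · obtain ⟨m, hm, hme⟩ := mem_image.mp h
        rw [mem_range] at hm
        exact F2 m (by omega) (by linear_combination hme)
  have hcompl : (Finset.univ \ ({b, a + b} : Finset (ZMod n))).card = n - 2 := by
    rw [card_sdiff_of_subset (subset_univ _)]
    have h2 : ({b, a + b} : Finset (ZMod n)).card = 2 := by
      rw [card_insert_of_notMem (by simp; intro h; exact ha0 h),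
        card_singleton]
    rw [h2, Finset.card_univ, ZMod.card n]
  have hWeq : W = Finset.univ \ {b, a + b} :=
    Finset.eq_of_subset_of_card_le hWsub (by rw [hcompl, hWcard])
  -- conclude
  by_contra hcon
  push_neg at hcon
  obtain ⟨hc1, hc2⟩ := hcon
  have hmem : a + x ∈ Finset.univ \ ({b, a + b} : Finset (ZMod n)) := by
    rw [mem_sdiff, mem_insert, mem_singleton]
    refine ⟨mem_univ _, ?_⟩
    rintro (h | h)
    · exact hc2 (by linear_combination h)
    · exact hc1 (by linear_combination h)
  rw [← hWeq, hW, mem_insert] at hmem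
  rcases hmem with h | h
  · exact hx0 (by linear_combination h)
  · obtain ⟨m, hm, hme⟩ := mem_image.mp h
    rw [mem_range] at hm
    exact F4 m (by omega) (by linear_combination hme)

/-- If `n ≥ 4` and `S` is a sequence of `n` elements of `ℤ/nℤ` with `MZ(S) = n - 1`,
then after reordering, `g_1 = ... = g_{n-1} = a` with `a` of order `n`, and `g_n = 2a`. -/
theorem stmt_7 (n : ℕ) (hn : 4 ≤ n) (g : Fin n → ZMod n)
    (hMZ : IsLeast {m : ℕ | ∃ T : Finset (Fin n),
      T.Nonempty ∧ ∑ i ∈ T, g i = 0 ∧ T.card = m} (n - 1)) :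
    ∃ σ : Equiv.Perm (Fin n), ∃ a : ZMod n, addOrderOf a = n ∧
      (∀ i : Fin n, (i : ℕ) < n - 1 → g (σ i) = a) ∧
      (∀ i : Fin n, (i : ℕ) = n - 1 → g (σ i) = 2 * a) := by
  haveI : NeZero n := ⟨by omega⟩
  obtain ⟨⟨T, hTne, hTsum, hTcard⟩, hlb⟩ := hMZ
  have hz0 : ∀ A : Finset (Fin n), A.Nonempty → A.card ≤ n - 2 → ∑ p ∈ A, g p ≠ 0 := by
    intro A hA hAc hs
    have := hlb ⟨A, hA, hs, rfl⟩
    omega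
  have hne0 : ∀ p : Fin n, g p ≠ 0 := by
    intro p hp
    refine hz0 {p} ⟨p, Finset.mem_singleton_self p⟩ (by simp; omega) (by simpa)
  have hpair : ∀ p q : Fin n, p ≠ q → g p + g q ≠ 0 := by
    intro p q hpq h
    refine hz0 {p, q} ⟨p, by simp⟩ ?_ ?_
    · rw [Finset.card_insert_of_notMem (by simpa), Finset.card_singleton]; omega
    · rwa [Finset.sum_insert (by simpa), Finset.sum_singleton]
  -- T is not constant
  obtain ⟨i, hi⟩ := hTne
  have hcast : ((n - 1 : ℕ) : ZMod n) = -1 := by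
    rw [Nat.cast_sub (by omega : 1 ≤ n), ZMod.natCast_self]
    ring
  have hnc : ∃ j ∈ T, g j ≠ g i := by
    by_contra hcon
    push_neg at hcon
    have hsum : ∑ p ∈ T, g p = (T.card : ZMod n) * g i := by
      rw [Finset.sum_congr rfl (fun p hp => hcon p hp), Finset.sum_const, nsmul_eq_mul]
    rw [hTsum, hTcard, hcast] at hsum
    exact hne0 i (by linear_combination hsum)
  obtain ⟨j, hj, hgj⟩ := hnc
  have hij : i ≠ j := fun h => hgj (by rw [h])
  set a := g i with ha
  set b := g j with hb
  have hab : a ≠ b := fun h => hgj h.symm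
  set K := T \ {i, j} with hK
  have hKcard : K.card = n - 3 := by
    rw [hK, Finset.card_sdiff_of_subset (by
      intro p hp
      simp only [Finset.mem_insert, Finset.mem_singleton] at hp
      rcases hp with h | h <;> subst h <;> assumption), hTcard,
      Finset.card_insert_of_notMem (by simpa), Finset.card_singleton]
    omega
  have hKmem : ∀ k ∈ K, k ∈ T ∧ i ≠ k ∧ j ≠ k := by
    intro k hk
    rw [hK, Finset.mem_sdiff] at hk
    simp only [Finset.mem_insert, Finset.mem_singleton] at hk
    push_neg at hk
    exact ⟨hk.1, fun h => hk.2.1 h.symm, fun h => hk.2.2 h.symm⟩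
  have hk1 : ∀ k ∈ K, g k = b ∨ g k = b - a := by
    intro k hk
    obtain ⟨hkT, hik, hjk⟩ := hKmem k hk
    exact keyA hn g hz0 hTcard hi hj hkT hij hik hjk hab
  have hk2 : ∀ k ∈ K, g k = a ∨ g k = a - b := by
    intro k hk
    obtain ⟨hkT, hik, hjk⟩ := hKmem k hk
    exact keyA hn g hz0 hTcard hj hi hkT hij.symm hjk hik hab.symm
  have hKne : K.Nonempty := by
    rw [← Finset.card_pos, hKcard]; omega
  -- structure of T
  have hstruct : ∃ c : ZMod n, ∃ p0, p0 ∈ T ∧ g p0 = 2 * c ∧ ∀ p ∈ T, p ≠ p0 → g p = c := by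
    by_cases h1 : a = 2 * b
    · refine ⟨b, i, hi, by rw [← ha, h1], ?_⟩
      intro p hp hpne
      by_cases hpj : p = j
      · rw [hpj]
      · have hpK : p ∈ K := by
          rw [hK, Finset.mem_sdiff]
          simp only [Finset.mem_insert, Finset.mem_singleton]
          exact ⟨hp, by push_neg; exact ⟨hpne, hpj⟩⟩
        rcases hk1 p hpK with h | h
        · exact h
        · rcases hk2 p hpK with h' | h'
          · exfalso
            apply hpair i j hij
            -- b - a = a, a = 2b ⇒ 3b = 0, a+b = 3b
            have hba : b - a = a := by rw [← h, ← h']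
            linear_combination -h1 - hba
          · exfalso
            -- b - a = a - b, a = 2b ⇒ a = 0
            have hba : b - a = a - b := by rw [← h, ← h']
            exact hne0 i (by linear_combination (-1 : ZMod n) * h1 - hba)
    · by_cases h2 : b = 2 * a
      · refine ⟨a, j, hj, by rw [← hb, h2], ?_⟩
        intro p hp hpne
        by_cases hpi : p = i
        · rw [hpi]
        · have hpK : p ∈ K := by
            rw [hK, Finset.mem_sdiff]
            simp only [Finset.mem_insert, Finset.mem_singleton]
            exact ⟨hp, by push_neg; exact ⟨hpi, hpne⟩⟩
          rcases hk2 p hpK with h | h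
          · exact h
          · rcases hk1 p hpK with h' | h'
            · exfalso
              apply h1
              have : a - b = b := by rw [← h, ← h']
              linear_combination this
            · exfalso
              have hba : a - b = b - a := by rw [← h, ← h']
              exact hne0 j (by linear_combination (-1 : ZMod n) * h2 - hba)
      · -- all of K has value b - a with b - a = a - b
        exfalso
        have hKval : ∀ k ∈ K, g k = b - a ∧ b - a = a - b := by
          intro k hk
          rcases hk1 k hk with h | h
          · rcases hk2 k hk with h' | h'
            · exact absurd (h'.symm.trans h) hab
            · exact absurd (by linear_combination -(h.symm.trans h') : a = 2 * b) h1
          · rcases hk2 k hk with h' | h'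
            · exact absurd (by linear_combination (h.symm.trans h') : b = 2 * a) h2
            · exact ⟨h, h.symm.trans h'⟩
        by_cases hK2 : 2 ≤ K.card
        · obtain ⟨k, hk, k', hk', hkk'⟩ := Finset.one_lt_card.mp hK2
          obtain ⟨hv, ht⟩ := hKval k hk
          obtain ⟨hv', _⟩ := hKval k' hk'
          apply hpair k k' hkk'
          rw [hv, hv']
          linear_combination ht
        · -- K.card = 1, n = 4
          have hn4 : n = 4 := by omega
          subst hn4
          obtain ⟨k, hkK⟩ := hKne
          obtain ⟨hkT, hik, hjk⟩ := hKmem k hkK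
          have hTeq : T = {i, j, k} := by
            refine (Finset.eq_of_subset_of_card_le ?_ ?_).symm
            · intro p hp
              simp only [Finset.mem_insert, Finset.mem_singleton] at hp
              rcases hp with h | h | h <;> subst h <;> assumption
            · rw [hTcard, Finset.card_insert_of_notMem (by simp [hij, hik]),
                Finset.card_insert_of_notMem (by simp [hjk]), Finset.card_singleton]
          obtain ⟨hv, ht⟩ := hKval k hkK
          rw [hTeq] at hTsum
          rw [Finset.sum_insert (by simp [hij, hik]),
            Finset.sum_insert (by simp [hjk]), Finset.sum_singleton, hv] at hTsum
          -- hTsum : a + (b + (b - a)) = 0, ht : b - a = a - b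
          have h2b : 2 * b = 0 := by linear_combination hTsum
          have h2a : 2 * a = 0 := by linear_combination hTsum - ht
          have : ∀ u v : ZMod 4, 2 * u = 0 → 2 * v = 0 → u ≠ 0 → v ≠ 0 → u = v := by decide
          exact hab (this a b h2a h2b (hne0 i) (hne0 j))
  obtain ⟨c, p0, hp0T, hgp0, hrest⟩ := hstruct
  -- c ≠ 0
  have hTerase : (T.erase p0).card = n - 2 := by
    rw [Finset.card_erase_of_mem hp0T, hTcard]
    omega
  have hc0 : c ≠ 0 := by
    have : (T.erase p0).Nonempty := by rw [← Finset.card_pos, hTerase]; omega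
    obtain ⟨q, hq⟩ := this
    have := hrest q (Finset.mem_of_mem_erase hq) (Finset.ne_of_mem_erase hq)
    rw [← this]; exact hne0 q
  -- order of c
  have hsmul : ∀ m : ℕ, 0 < m → m < n → m • c ≠ 0 := by
    intro m hm1 hm2 hmc
    rcases le_or_gt m (n - 2) with hle | hgt
    · obtain ⟨B, hBsub, hBcard⟩ := Finset.exists_subset_card_eq (show m ≤ (T.erase p0).card by omega)
      refine hz0 B (by rw [← Finset.card_pos, hBcard]; omega) (by omega) ?_
      have : ∑ p ∈ B, g p = (B.card : ZMod n) * c := by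
        rw [Finset.sum_congr rfl (fun p hp => hrest p
          (Finset.mem_of_mem_erase (hBsub hp)) (Finset.ne_of_mem_erase (hBsub hp))),
          Finset.sum_const, nsmul_eq_mul]
      rw [this, hBcard, ← nsmul_eq_mul]
      exact hmc
    · -- m = n - 1
      have hm : m = n - 1 := by omega
      subst hm
      rw [nsmul_eq_mul, hcast] at hmc
      exact hc0 (by linear_combination -hmc)
  have hord : addOrderOf c = n := by
    have hdvd : addOrderOf c ∣ n := by
      apply addOrderOf_dvd_of_nsmul_eq_zero
      rw [nsmul_eq_mul, ZMod.natCast_self, zero_mul]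
    have hne : addOrderOf c ≠ 0 := by
      intro h
      rw [h] at hdvd
      have := Nat.eq_zero_of_zero_dvd hdvd
      omega
    by_contra hne'
    have hlt : addOrderOf c < n := lt_of_le_of_ne (Nat.le_of_dvd (by omega) hdvd) hne'
    exact hsmul _ (by omega) hlt (addOrderOf_nsmul_eq_zero c)
  -- the outside element
  have houtcard : (Finset.univ \ T).card = 1 := by
    rw [Finset.card_sdiff_of_subset (Finset.subset_univ _), Finset.card_univ, Fintype.card_fin, hTcard]
    omega
  obtain ⟨iout, hiout⟩ := Finset.card_eq_one.mp houtcard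
  have hioutT : iout ∉ T := by
    have : iout ∈ Finset.univ \ T := by rw [hiout]; exact Finset.mem_singleton_self _
    rw [Finset.mem_sdiff] at this
    exact this.2
  have hioutne : ∀ m : ℕ, m ≤ n - 2 → g iout + m • c ≠ 0 := by
    intro m hm hzero
    rcases le_or_gt m (n - 3) with hle | hgt
    · obtain ⟨B, hBsub, hBcard⟩ := Finset.exists_subset_card_eq (show m ≤ (T.erase p0).card by omega)
      have hioutB : iout ∉ B := fun h => hioutT (Finset.mem_of_mem_erase (hBsub h))
      refine hz0 (insert iout B) ⟨iout, Finset.mem_insert_self _ _⟩ ?_ ?_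
      · rw [Finset.card_insert_of_notMem hioutB, hBcard]; omega
      · rw [Finset.sum_insert hioutB]
        have : ∑ p ∈ B, g p = (B.card : ZMod n) * c := by
          rw [Finset.sum_congr rfl (fun p hp => hrest p
            (Finset.mem_of_mem_erase (hBsub hp)) (Finset.ne_of_mem_erase (hBsub hp))),
            Finset.sum_const, nsmul_eq_mul]
        rw [this, hBcard, ← nsmul_eq_mul]
        exact hzero
    · -- 2 ≤ m
      have hm2 : 2 ≤ m := by omega
      obtain ⟨B, hBsub, hBcard⟩ := Finset.exists_subset_card_eq (show m - 2 ≤ (T.erase p0).card by omega)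
      have hp0B : p0 ∉ B := fun h => Finset.ne_of_mem_erase (hBsub h) rfl
      have hioutB : iout ∉ insert p0 B := by
        intro h
        rcases Finset.mem_insert.mp h with h | h
        · exact hioutT (h ▸ hp0T)
        · exact hioutT (Finset.mem_of_mem_erase (hBsub h))
      refine hz0 (insert iout (insert p0 B)) ⟨iout, Finset.mem_insert_self _ _⟩ ?_ ?_
      · rw [Finset.card_insert_of_notMem hioutB, Finset.card_insert_of_notMem hp0B, hBcard]
        omega
      · rw [Finset.sum_insert hioutB, Finset.sum_insert hp0B]
        have hBsum : ∑ p ∈ B, g p = (B.card : ZMod n) * c := by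
          rw [Finset.sum_congr rfl (fun p hp => hrest p
            (Finset.mem_of_mem_erase (hBsub hp)) (Finset.ne_of_mem_erase (hBsub hp))),
            Finset.sum_const, nsmul_eq_mul]
        rw [hBsum, hBcard, hgp0]
        rw [nsmul_eq_mul] at hzero
        have hcm : ((m - 2 : ℕ) : ZMod n) = (m : ZMod n) - 2 := by
          rw [Nat.cast_sub hm2]; norm_num
        rw [hcm]
        linear_combination hzero
  -- g iout = c
  have hioutc : g iout = c := by
    have hinj : Set.InjOn (fun m : ℕ => g iout + m • c) (Finset.range n) := by
      intro m hm m' hm' hee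
      rw [Finset.coe_range, Set.mem_Iio] at hm hm'
      by_contra hne
      rcases Nat.lt_or_ge m m' with h | h
      · refine hsmul (m' - m) (by omega) (by omega) ?_
        have : (m' : ZMod n) * c - (m : ZMod n) * c = 0 := by
          simp only [nsmul_eq_mul] at hee
          linear_combination -hee
        rw [nsmul_eq_mul, Nat.cast_sub h.le]
        linear_combination this
      · refine hsmul (m - m') (by omega) (by omega) ?_
        have : (m : ZMod n) * c - (m' : ZMod n) * c = 0 := by
          simp only [nsmul_eq_mul] at hee
          linear_combination hee
        rw [nsmul_eq_mul, Nat.cast_sub h]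
        linear_combination this
    have himg : (Finset.range n).image (fun m : ℕ => g iout + m • c) = Finset.univ := by
      apply Finset.eq_univ_of_card
      rw [Finset.card_image_of_injOn hinj, Finset.card_range]
      exact (ZMod.card n).symm
    have h0 : (0 : ZMod n) ∈ (Finset.range n).image (fun m : ℕ => g iout + m • c) := by
      rw [himg]; exact Finset.mem_univ _
    obtain ⟨m, hm, hme⟩ := Finset.mem_image.mp h0
    rw [Finset.mem_range] at hm
    rcases le_or_gt m (n - 2) with hle | hgt
    · exact absurd hme (hioutne m hle)
    · have : m = n - 1 := by omega
      subst this
      rw [nsmul_eq_mul, hcast] at hme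
      linear_combination hme
  have hgc : ∀ p : Fin n, p ≠ p0 → g p = c := by
    intro p hp
    by_cases hpT : p ∈ T
    · exact hrest p hpT hp
    · have : p ∈ Finset.univ \ T := Finset.mem_sdiff.mpr ⟨Finset.mem_univ _, hpT⟩
      rw [hiout, Finset.mem_singleton] at this
      rw [this, hioutc]
  -- build the permutation
  have hlastlt : n - 1 < n := by omega
  refine ⟨Equiv.swap ⟨n - 1, hlastlt⟩ p0, c, hord, ?_, ?_⟩
  · intro q hq
    apply hgc
    intro hcon
    have hq_ne : q ≠ ⟨n - 1, hlastlt⟩ := by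
      intro h
      rw [h] at hq
      simp at hq
    apply hq_ne
    have := (Equiv.swap ⟨n - 1, hlastlt⟩ p0).injective
      (hcon.trans (Equiv.swap_apply_left ⟨n - 1, hlastlt⟩ p0).symm)
    exact this
  · intro q hq
    have hql : q = ⟨n - 1, hlastlt⟩ := Fin.ext hq
    rw [hql, Equiv.swap_apply_left, hgp0]
end

section
/- Let G be a finite abelian group of order n and let S = (g_1, ..., g_k) be a sequence of k ≤ n elements of G such that 0 is not a subsequence sum of S and |Σ(S)| = k. Then all terms of S are equal: g_1 = g_2 = ... = g_k. -/
/-- Lemma: if `S = (g_1, ..., g_k)` is a sequence of `k ≤ n = |G|` elements of a finite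
abelian group `G` with no nonempty zero-sum subsequence and `|Σ(S)| = k`, then all
terms of `S` are equal. -/
theorem stmt_8 {G : Type*} [AddCommGroup G] [Fintype G] (n k : ℕ)
    (hcard : Fintype.card G = n) (hk : k ≤ n) (g : Fin k → G)
    (h0 : ∀ T : Finset (Fin k), T.Nonempty → ∑ i ∈ T, g i ≠ 0)
    (hS : Set.ncard {x : G | ∃ T : Finset (Fin k),
      T.Nonempty ∧ ∑ i ∈ T, g i = x} = k) :
    ∀ i j : Fin k, g i = g j := by
  intro i j
  by_contra hne
  classical
  have hij : i ≠ j := fun h => hne (by rw [h])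
  -- rank function putting i first, j second
  set r : Fin k → ℕ := fun x => if x = i then 0 else if x = j then 1 else (x : ℕ) + 2 with hr
  have hrinj : Function.Injective r := by
    intro a b hab
    simp only [hr] at hab
    by_cases ha : a = i <;> by_cases hb : b = i <;>
      by_cases ha' : a = j <;> by_cases hb' : b = j <;>
      simp_all <;> omega
  set T : Fin k → Finset (Fin k) := fun x => Finset.univ.filter (fun y => r y ≤ r x) with hT
  have hmemT : ∀ x, x ∈ T x := by
    intro x; simp [hT]
  have hsub : ∀ x x', r x ≤ r x' → T x ⊆ T x' := by
    intro x x' h y hy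
    simp only [hT, Finset.mem_filter, Finset.mem_univ, true_and] at hy ⊢
    omega
  set f : Fin k → G := fun x => ∑ y ∈ T x, g y with hf
  -- distinct sums along the chain
  have key : ∀ x x', r x < r x' → f x ≠ f x' := by
    intro x x' hlt heq
    have hss : T x ⊆ T x' := hsub _ _ hlt.le
    have hx' : x' ∈ T x' \ T x := by
      simp only [Finset.mem_sdiff, hmemT, true_and, hT, Finset.mem_filter,
        Finset.mem_univ, true_and]
      omega
    have hsdiff := Finset.sum_sdiff (f := g) hss
    have hzero : ∑ y ∈ T x' \ T x, g y = 0 := by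
      simp only [hf] at heq
      rw [heq] at hsdiff
      exact add_eq_right.mp hsdiff
    exact h0 _ ⟨x', hx'⟩ hzero
  have hfinj : Function.Injective f := by
    intro a b hab
    by_contra hne'
    rcases lt_trichotomy (r a) (r b) with h | h | h
    · exact key a b h hab
    · exact hne' (hrinj h)
    · exact key b a h hab.symm
  -- basic facts about r and T at i
  have hri : r i = 0 := by simp [hr]
  have hrpos : ∀ y, y ≠ i → 1 ≤ r y := by
    intro y hy
    simp only [hr, if_neg hy]
    by_cases hyj : y = j
    · simp [hyj]
    · simp only [if_neg hyj]; omega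
  have hTi : T i = {i} := by
    ext y
    simp only [hT, Finset.mem_filter, Finset.mem_univ, true_and,
      Finset.mem_singleton, hri, Nat.le_zero]
    constructor
    · intro h
      by_contra hy
      have := hrpos y hy
      omega
    · intro h; subst h; exact hri
  have hfi : f i = g i := by simp only [hf, hTi, Finset.sum_singleton]
  -- g j differs from every f x
  have hgj : ∀ x, g j ≠ f x := by
    intro x heq
    by_cases hx : x = i
    · rw [hx, hfi] at heq; exact hne heq.symm
    · have hjmem : j ∈ T x := by
        simp only [hT, Finset.mem_filter, Finset.mem_univ, true_and]
        have hrj : r j ≤ 1 := by simp [hr, hij.symm]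
        have := hrpos x hx
        omega
      have himem : i ∈ (T x).erase j := by
        refine Finset.mem_erase.mpr ⟨hij, ?_⟩
        simp only [hT, Finset.mem_filter, Finset.mem_univ, true_and, hri]
        omega
      have hsplit := Finset.add_sum_erase (T x) g hjmem
      simp only [hf] at heq
      rw [← heq] at hsplit
      exact h0 _ ⟨i, himem⟩ (add_eq_left.mp hsplit)
  -- build a finset of k+1 distinct elements of the sumset
  set A : Finset G := insert (g j) (Finset.image f Finset.univ) with hA
  have hAcard : A.card = k + 1 := by
    rw [hA, Finset.card_insert_of_notMem, Finset.card_image_of_injective _ hfinj,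
      Finset.card_univ, Fintype.card_fin]
    simp only [Finset.mem_image, Finset.mem_univ, true_and, not_exists]
    intro x hx
    exact hgj x hx.symm
  set S : Set G := {x : G | ∃ T : Finset (Fin k), T.Nonempty ∧ ∑ i ∈ T, g i = x} with hSdef
  have hAsub : (A : Set G) ⊆ S := by
    intro x hx
    simp only [hA, Finset.coe_insert, Set.mem_insert_iff, Finset.coe_image,
      Set.mem_image, Finset.mem_coe, Finset.mem_univ] at hx
    rcases hx with rfl | ⟨y, _, rfl⟩
    · exact ⟨{j}, ⟨j, Finset.mem_singleton_self j⟩, by simp⟩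
    · exact ⟨T y, ⟨y, hmemT y⟩, rfl⟩
  have hle : (k + 1 : ℕ) ≤ Set.ncard S := by
    rw [← hAcard, ← Set.ncard_coe_finset]
    exact Set.ncard_le_ncard hAsub (Set.toFinite S)
  rw [hS] at hle
  omega
end

section
/- Let n be a positive integer, s ∈ {0, ..., n-1}, and let S = (g_1, ..., g_n) be a sequence of n elements of the cyclic group Z_n with MZ(S) = n - s and with exactly s + 1 distinct elements. Then, after a suitable permutation of the terms, g_1 = g_2 = ... = g_{n-s} and the elements g_{n-s}, g_{n-s+1}, ..., g_n are pairwise distinct. Equivalently, some element of Z_n occurs with multiplicity n - s in S and each of the other s distinct elements of S occurs exactly once. -/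
/-- Corollary: if `S` is a sequence of `n` elements of `ℤ/nℤ` with `MZ(S) = n - s` and
exactly `s + 1` distinct elements, then after a suitable permutation the first `n - s`
terms are equal and the last `s + 1` terms (positions `n - s, ..., n`, 1-indexed) are
pairwise distinct. -/
theorem stmt_9 (n s : ℕ) (hn : 0 < n) (hs : s ≤ n - 1) (g : Fin n → ZMod n)
    (hMZ : IsLeast {m : ℕ | ∃ T : Finset (Fin n),
      T.Nonempty ∧ ∑ i ∈ T, g i = 0 ∧ T.card = m} (n - s))
    (hsupp : (Finset.univ.image g).card = s + 1) :
    ∃ σ : Equiv.Perm (Fin n),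
      (∀ i j : Fin n, (i : ℕ) < n - s → (j : ℕ) < n - s → g (σ i) = g (σ j)) ∧
      (∀ i j : Fin n, n - s - 1 ≤ (i : ℕ) → n - s - 1 ≤ (j : ℕ) → i ≠ j →
        g (σ i) ≠ g (σ j)) := by
  classical
  haveI : NeZero n := ⟨hn.ne'⟩
  have hs' : s + 1 ≤ n := by omega
  set V : Finset (ZMod n) := Finset.univ.image g with hV
  have hVcard : V.card = s + 1 := hsupp
  -- no short zero sums
  have hnz : ∀ T : Finset (Fin n), T.Nonempty → T.card < n - s → ∑ i ∈ T, g i ≠ 0 := by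
    intro T hne hcard hsum
    exact absurd (hMZ.2 ⟨T, hne, hsum, rfl⟩) (by omega)
  -- Main claim: some value is attained at least n - s times
  obtain ⟨v, hv⟩ : ∃ v, n - s ≤ (Finset.univ.filter fun i => g i = v).card := by
    rcases le_or_gt (n - s) 1 with h1 | h2
    · refine ⟨g ⟨0, hn⟩, ?_⟩
      have hmem : (⟨0, hn⟩ : Fin n) ∈ Finset.univ.filter (fun i => g i = g ⟨0, hn⟩) := by
        exact Finset.mem_filter.2 ⟨Finset.mem_univ _, rfl⟩
      have := Finset.card_pos.2 ⟨_, hmem⟩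
      omega
    · -- choice function picking a preimage of each value
      set d : ZMod n → Fin n := fun w => if h : ∃ i, g i = w then h.choose else ⟨0, hn⟩
        with hd_def
      have hd : ∀ w ∈ V, g (d w) = w := by
        intro w hw
        obtain ⟨i, -, rfl⟩ := Finset.mem_image.1 hw
        have hex : ∃ i', g i' = g i := ⟨i, rfl⟩
        simp only [hd_def, dif_pos hex]
        exact hex.choose_spec
      set D : Finset (Fin n) := V.image d with hD
      have hDcard : D.card = s + 1 := by
        rw [hD, Finset.card_image_of_injOn, hVcard]
        intro a ha b hb hab
        rw [← hd a ha, ← hd b hb, hab]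
      set U : Finset (Fin n) := Dᶜ with hU
      have hUcard : U.card = n - (s + 1) := by
        rw [hU, Finset.card_compl, hDcard, Fintype.card_fin]
      have hUlt : U.card < n - s := by omega
      -- nonempty subsets of U have nonzero sum
      have subnz : ∀ C : Finset (Fin n), C ⊆ U → C.Nonempty → ∑ i ∈ C, g i ≠ 0 := by
        intro C hCU hCne
        exact hnz C hCne (lt_of_le_of_lt (Finset.card_le_card hCU) hUlt)
      by_cases hconst : ∀ i ∈ U, ∀ j ∈ U, g i = g j
      · -- U is constant: its value has high multiplicity
        have hUne : U.Nonempty := Finset.card_pos.1 (by omega)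
        obtain ⟨i₀, hi₀⟩ := hUne
        refine ⟨g i₀, ?_⟩
        have hgV : g i₀ ∈ V := Finset.mem_image_of_mem g (Finset.mem_univ i₀)
        have hdD : d (g i₀) ∈ D := Finset.mem_image_of_mem d hgV
        have hdU : d (g i₀) ∉ U := by
          rw [hU]
          simp [hdD]
        have hsub : insert (d (g i₀)) U ⊆ Finset.univ.filter fun i => g i = g i₀ := by
          intro x hx
          rcases Finset.mem_insert.1 hx with h | h
          · subst h
            simp [hd _ hgV]
          · simp [hconst x h i₀ hi₀]
        have := Finset.card_le_card hsub
        rw [Finset.card_insert_of_notMem hdU] at this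
        omega
      · -- U non-constant: contradiction
        exfalso
        push_neg at hconst
        obtain ⟨i0, hi0, j0, hj0, hgij⟩ := hconst
        have hij : i0 ≠ j0 := fun h => hgij (by rw [h])
        set U' : Finset (Fin n) := U \ {i0, j0} with hU'
        have hpair : ({i0, j0} : Finset (Fin n)) ⊆ U := by
          intro x hx
          rcases Finset.mem_insert.1 hx with rfl | hx
          · exact hi0
          · rw [Finset.mem_singleton.1 hx]; exact hj0
        have hpaircard : ({i0, j0} : Finset (Fin n)).card = 2 := by
          rw [Finset.card_insert_of_notMem (by simp [hij]), Finset.card_singleton]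
        have hU'card : U'.card = U.card - 2 := by
          rw [hU', Finset.card_sdiff_of_subset hpair, hpaircard]
        have hU2 : 2 ≤ U.card := hpaircard ▸ Finset.card_le_card hpair
        have hi0U' : i0 ∉ U' := by simp [hU']
        have hj0U' : j0 ∉ U' := by simp [hU']
        have hU'U : U' ⊆ U := Finset.sdiff_subset
        -- Lemma B: distinct subset sums from any W ⊆ U
        have lemB : ∀ W : Finset (Fin n), W ⊆ U → ∃ X : Finset (ZMod n),
            X.card = W.card ∧ ∀ x ∈ X, ∃ C, C ⊆ W ∧ C.Nonempty ∧ ∑ i ∈ C, g i = x := by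
          intro W
          induction W using Finset.induction_on with
          | empty => intro _; exact ⟨∅, by simp, by simp⟩
          | @insert a W' ha ih =>
            intro hWU
            obtain ⟨X, hXcard, hX⟩ := ih (fun x hx => hWU (Finset.mem_insert_of_mem hx))
            have hnotmem : (∑ i ∈ insert a W', g i) ∉ X := by
              intro hmem
              obtain ⟨C, hCW, hCne, hCsum⟩ := hX _ hmem
              have hCsub : C ⊆ insert a W' := hCW.trans (Finset.subset_insert _ _)
              have hsd := Finset.sum_sdiff (f := g) hCsub
              have hzero : ∑ i ∈ (insert a W') \ C, g i = 0 := by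
                have : ∑ i ∈ (insert a W') \ C, g i + ∑ i ∈ C, g i = ∑ i ∈ C, g i := by
                  rw [hsd, hCsum]
                exact add_right_cancel (b := ∑ i ∈ C, g i) (by rw [this, zero_add])
              have hane : a ∈ (insert a W') \ C := by
                rw [Finset.mem_sdiff]
                exact ⟨Finset.mem_insert_self _ _, fun hc => ha (hCW hc)⟩
              exact subnz _ (Finset.sdiff_subset.trans hWU) ⟨a, hane⟩ hzero
            refine ⟨insert (∑ i ∈ insert a W', g i) X, ?_, ?_⟩
            · rw [Finset.card_insert_of_notMem hnotmem, hXcard,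
                Finset.card_insert_of_notMem ha]
            · intro x hx
              rcases Finset.mem_insert.1 hx with rfl | hx
              · exact ⟨insert a W', Finset.Subset.refl _, ⟨a, Finset.mem_insert_self _ _⟩, rfl⟩
              · obtain ⟨C, h1, h2, h3⟩ := hX x hx
                exact ⟨C, h1.trans (Finset.subset_insert _ _), h2, h3⟩
        obtain ⟨X', hX'card, hX'⟩ := lemB U' hU'U
        set y1 : ZMod n := (∑ i ∈ U', g i) + g i0 with hy1
        set y2 : ZMod n := (∑ i ∈ U', g i) + g j0 with hy2
        have hy12 : y1 ≠ y2 := fun h => hgij (by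
          have := h
          rw [hy1, hy2] at this
          exact add_left_cancel this)
        -- fresh: y1, y2 ∉ X'
        have hfresh : ∀ z : Fin n, z ∈ U → z ∉ U' → ((∑ i ∈ U', g i) + g z) ∉ X' := by
          intro z hzU hzU' hmem
          obtain ⟨C, hCW, hCne, hCsum⟩ := hX' _ hmem
          have hsd := Finset.sum_sdiff (f := g) hCW
          have hzC : z ∉ U' \ C := fun h => hzU' (Finset.mem_sdiff.1 h).1
          have hzero : ∑ i ∈ insert z (U' \ C), g i = 0 := by
            rw [Finset.sum_insert hzC]
            have h1 : ∑ i ∈ U' \ C, g i = ∑ i ∈ U', g i - ∑ i ∈ C, g i := by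
              rw [eq_sub_iff_add_eq, hsd]
            rw [h1, hCsum]
            ring
          have hsub : insert z (U' \ C) ⊆ U := by
            intro x hx
            rcases Finset.mem_insert.1 hx with rfl | hx
            · exact hzU
            · exact hU'U (Finset.mem_sdiff.1 hx).1
          exact subnz _ hsub ⟨z, Finset.mem_insert_self _ _⟩ hzero
        have hy1X : y1 ∉ X' := hfresh i0 hi0 hi0U'
        have hy2X : y2 ∉ X' := hfresh j0 hj0 hj0U'
        set X : Finset (ZMod n) := insert y1 (insert y2 X') with hX_def
        have hXcard : X.card = U.card := by
          rw [hX_def, Finset.card_insert_of_notMem (by simp [hy12, hy1X]),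
            Finset.card_insert_of_notMem hy2X, hX'card, hU'card]
          omega
        -- every element of X is a sum over a proper nonempty subset of U
        have key : ∀ x ∈ X, ∃ C, C ⊆ U ∧ C.Nonempty ∧ C.card < U.card ∧ ∑ i ∈ C, g i = x := by
          intro x hx
          rcases Finset.mem_insert.1 hx with rfl | hx
          · refine ⟨insert i0 U', ?_, ⟨i0, Finset.mem_insert_self _ _⟩, ?_, ?_⟩
            · intro t ht
              rcases Finset.mem_insert.1 ht with rfl | ht
              · exact hi0
              · exact hU'U ht
            · rw [Finset.card_insert_of_notMem hi0U', hU'card]; omega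
            · rw [Finset.sum_insert hi0U', hy1]; ring
          rcases Finset.mem_insert.1 hx with rfl | hx
          · refine ⟨insert j0 U', ?_, ⟨j0, Finset.mem_insert_self _ _⟩, ?_, ?_⟩
            · intro t ht
              rcases Finset.mem_insert.1 ht with rfl | ht
              · exact hj0
              · exact hU'U ht
            · rw [Finset.card_insert_of_notMem hj0U', hU'card]; omega
            · rw [Finset.sum_insert hj0U', hy2]; ring
          · obtain ⟨C, h1, h2, h3⟩ := hX' x hx
            exact ⟨C, h1.trans hU'U, h2, lt_of_le_of_lt (Finset.card_le_card h1)
              (by omega), h3⟩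
        have hX0 : (0 : ZMod n) ∉ X := by
          intro h
          obtain ⟨C, hCU, hCne, -, hsum⟩ := key 0 h
          exact subnz C hCU hCne hsum
        set NV : Finset (ZMod n) := V.image (fun w => -w) with hNV
        have hNVcard : NV.card = s + 1 := by
          rw [hNV, Finset.card_image_of_injective _ neg_injective, hVcard]
        have hdisj : Disjoint (insert (0 : ZMod n) X) NV := by
          rw [Finset.disjoint_left]
          intro x hx hxNV
          obtain ⟨w, hwV, rfl⟩ := Finset.mem_image.1 hxNV
          have hdD : d w ∈ D := Finset.mem_image_of_mem d hwV
          have hdU : d w ∉ U := by rw [hU]; simp [hdD]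
          rcases Finset.mem_insert.1 hx with h0 | hxX
          · -- -w = 0, so {d w} is a zero-sum singleton
            have hw0 : w = 0 := by
              have := h0.symm
              simpa using this
            refine hnz {d w} ⟨d w, Finset.mem_singleton_self _⟩ (by simpa using h2) ?_
            rw [Finset.sum_singleton, hd w hwV, hw0]
          · obtain ⟨C, hCU, hCne, hClt, hsum⟩ := key _ hxX
            have hdC : d w ∉ C := fun h => hdU (hCU h)
            have hzero : ∑ i ∈ insert (d w) C, g i = 0 := by
              rw [Finset.sum_insert hdC, hd w hwV, hsum]
              ring
            refine hnz _ ⟨d w, Finset.mem_insert_self _ _⟩ ?_ hzero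
            rw [Finset.card_insert_of_notMem hdC]
            omega
        have hcardN : (insert (0 : ZMod n) X ∪ NV).card = n + 1 := by
          rw [Finset.card_union_of_disjoint hdisj, Finset.card_insert_of_notMem hX0,
            hXcard, hNVcard, hUcard]
          omega
        have hle : (insert (0 : ZMod n) X ∪ NV).card ≤ n := by
          have := Finset.card_le_univ (insert (0 : ZMod n) X ∪ NV)
          rwa [ZMod.card] at this
        omega
  -- Counting: exact multiplicities
  set A : Finset (Fin n) := Finset.univ.filter fun i => g i = v with hA
  have hk1 : 1 ≤ n - s := by omega
  have hAne : A.Nonempty := Finset.card_pos.1 (by omega)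
  have hvV : v ∈ V := by
    obtain ⟨i, hi⟩ := hAne
    have := (Finset.mem_filter.1 hi).2
    rw [← this]
    exact Finset.mem_image_of_mem g (Finset.mem_univ i)
  have hsubset : V.erase v ⊆ Aᶜ.image g := by
    intro w hw
    have hwne : w ≠ v := Finset.ne_of_mem_erase hw
    obtain ⟨i, -, rfl⟩ := Finset.mem_image.1 (Finset.mem_of_mem_erase hw)
    refine Finset.mem_image_of_mem g ?_
    rw [Finset.mem_compl, hA]
    simp [hwne]
  have h1 : s ≤ (Aᶜ.image g).card := by
    have := Finset.card_le_card hsubset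
    rwa [Finset.card_erase_of_mem hvV, hVcard, Nat.add_sub_cancel] at this
  have h2 : (Aᶜ.image g).card ≤ Aᶜ.card := Finset.card_image_le
  have h3 : Aᶜ.card = n - A.card := by
    rw [Finset.card_compl, Fintype.card_fin]
  have hAub : A.card ≤ n := by
    have := Finset.card_le_univ A
    rwa [Fintype.card_fin] at this
  have hAcard : A.card = n - s := by omega
  have hAcc : Aᶜ.card = s := by omega
  have hinjcard : (Aᶜ.image g).card = Aᶜ.card := by omega
  have hinj : Set.InjOn g ↑(Aᶜ) := Finset.card_image_iff.1 hinjcard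
  -- build the permutation
  have hks : n = (n - s) + s := by omega
  set k := n - s with hkdef
  have eA : Fin k ≃ {x // x ∈ A} := (A.orderIsoOfFin hAcard).toEquiv
  have eB : Fin s ≃ {x // x ∈ Aᶜ} := (Aᶜ.orderIsoOfFin hAcc).toEquiv
  have eB' : Fin s ≃ {x : Fin n // ¬ x ∈ A} :=
    eB.trans (Equiv.subtypeEquivRight (fun x => Finset.mem_compl))
  set σ : Equiv.Perm (Fin n) :=
    ((finCongr hks).trans finSumFinEquiv.symm).trans
      ((eA.sumCongr eB').trans (Equiv.sumCompl (fun x => x ∈ A))) with hσ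
  have hmemA : ∀ i : Fin n, (i : ℕ) < k → σ i ∈ A := by
    intro i h
    have hstep : finSumFinEquiv.symm (finCongr hks i) = Sum.inl (⟨(i : ℕ), h⟩ : Fin k) := by
      rw [Equiv.symm_apply_eq]
      apply Fin.ext
      simp
    have : σ i = ((eA.sumCongr eB').trans (Equiv.sumCompl (fun x => x ∈ A)))
        (Sum.inl (⟨(i : ℕ), h⟩ : Fin k)) := by
      rw [hσ]
      simp only [Equiv.trans_apply]
      rw [hstep]
    rw [this]
    simp only [Equiv.trans_apply, Equiv.sumCongr_apply, Sum.map_inl,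
      Equiv.sumCompl_apply_inl]
    exact (eA ⟨(i : ℕ), h⟩).2
  have hmemB : ∀ i : Fin n, k ≤ (i : ℕ) → σ i ∉ A := by
    intro i h
    have hlt : (i : ℕ) - k < s := by
      have := i.2
      omega
    have hstep : finSumFinEquiv.symm (finCongr hks i)
        = Sum.inr (⟨(i : ℕ) - k, hlt⟩ : Fin s) := by
      rw [Equiv.symm_apply_eq]
      apply Fin.ext
      simp
      omega
    have : σ i = ((eA.sumCongr eB').trans (Equiv.sumCompl (fun x => x ∈ A)))
        (Sum.inr (⟨(i : ℕ) - k, hlt⟩ : Fin s)) := by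
      rw [hσ]
      simp only [Equiv.trans_apply]
      rw [hstep]
    rw [this]
    simp only [Equiv.trans_apply, Equiv.sumCongr_apply, Sum.map_inr,
      Equiv.sumCompl_apply_inr]
    exact (eB' ⟨(i : ℕ) - k, hlt⟩).2
  have hval : ∀ i : Fin n, (i : ℕ) < k → g (σ i) = v := by
    intro i h
    exact (Finset.mem_filter.1 (hmemA i h)).2
  have hnval : ∀ i : Fin n, k ≤ (i : ℕ) → g (σ i) ≠ v := by
    intro i h hc
    exact hmemB i h (by rw [hA]; simp [hc])
  refine ⟨σ, ?_, ?_⟩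
  · intro i j hi hj
    rw [hval i hi, hval j hj]
  · intro i j hi hj hij
    rcases lt_or_ge (i : ℕ) k with hik | hik <;> rcases lt_or_ge (j : ℕ) k with hjk | hjk
    · exact absurd (Fin.ext (by omega : (i : ℕ) = (j : ℕ))) hij
    · intro hc
      exact hnval j hjk (by rw [← hc, hval i hik])
    · intro hc
      exact hnval i hik (by rw [hc, hval j hjk])
    · intro hc
      have hiA : σ i ∈ Aᶜ := Finset.mem_compl.2 (hmemB i hik)
      have hjA : σ j ∈ Aᶜ := Finset.mem_compl.2 (hmemB j hjk)
      have := hinj (by exact_mod_cast hiA) (by exact_mod_cast hjA) hc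
      exact hij (σ.injective this)
end

section
/- Let n ≥ 2 be an integer, s ∈ {0, ..., n-1}, and suppose there exists a sequence S = (g_1, ..., g_n) of n elements of the cyclic group Z_n with MZ(S) = n - s whose number of distinct elements is exactly s + 1. Then s ∈ {0, 1, n-2, n-1}. -/
set_option linter.unusedSectionVars false
set_option linter.unusedVariables false
set_option maxHeartbeats 1000000
open Finset

variable {G : Type*} [AddCommGroup G] [DecidableEq G] {ι : Type*} [DecidableEq ι]

/-- set of all subset sums (including 0 from ∅) -/
def sums (g : ι → G) (U : Finset ι) : Finset G := U.powerset.image (fun T => ∑ i ∈ T, g i)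

lemma zero_mem_sums (g : ι → G) (U : Finset ι) : 0 ∈ sums g U := by
  refine mem_image.2 ⟨∅, by simp⟩

lemma sums_mono (g : ι → G) {U V : Finset ι} (h : U ⊆ V) : sums g U ⊆ sums g V := by
  apply image_subset_image
  exact powerset_mono.2 h

lemma sums_step (g : ι → G) (U : Finset ι) (x : ι) (hx : x ∈ U)
    (hzsf : ∀ T ⊆ U, T.Nonempty → ∑ i ∈ T, g i ≠ 0) :
    (sums g (U.erase x)).card + 1 ≤ (sums g U).card := by
  set U' := U.erase x with hU'
  have hsub : sums g U' ⊆ sums g U := sums_mono g (erase_subset _ _)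
  have hclaim : ∃ T ⊆ U', (∑ i ∈ T, g i) + g x ∉ sums g U' := by
    by_contra hc
    push_neg at hc
    have himg : (sums g U').image (· + g x) ⊆ sums g U' := by
      intro y hy
      obtain ⟨z, hz, rfl⟩ := mem_image.1 hy
      obtain ⟨T, hT, rfl⟩ := mem_image.1 hz
      exact hc T (mem_powerset.1 hT)
    have hcard : ((sums g U').image (· + g x)).card = (sums g U').card :=
      card_image_of_injective _ (add_left_injective (g x))
    have heq : (sums g U').image (· + g x) = sums g U' :=
      eq_of_subset_of_card_le himg (le_of_eq hcard.symm)
    have h0 : (0 : G) ∈ (sums g U').image (· + g x) := by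
      rw [heq]; exact zero_mem_sums g U'
    obtain ⟨y, hy, hy0⟩ := mem_image.1 h0
    obtain ⟨T, hT, rfl⟩ := mem_image.1 hy
    have hTU' : T ⊆ U' := mem_powerset.1 hT
    have hTx : x ∉ T := fun h => (mem_erase.1 (hTU' h)).1 rfl
    refine hzsf (insert x T) ?_ (insert_nonempty _ _) ?_
    · intro i hi
      rcases mem_insert.1 hi with rfl | hi
      · exact hx
      · exact (erase_subset _ _) (hTU' hi)
    · rw [sum_insert hTx, add_comm]
      exact hy0
  obtain ⟨T, hT, hnew⟩ := hclaim
  have hmem : (∑ i ∈ T, g i) + g x ∈ sums g U := by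
    have hTx : x ∉ T := fun h => (mem_erase.1 (hT h)).1 rfl
    refine mem_image.2 ⟨insert x T, ?_, ?_⟩
    · refine mem_powerset.2 (insert_subset hx (hT.trans (erase_subset _ _)))
    · rw [sum_insert hTx, add_comm]
  have : sums g U' ⊂ sums g U := ⟨hsub, fun h => hnew (h hmem)⟩
  exact card_lt_card this

lemma olson (g : ι → G) : ∀ (m : ℕ) (U : Finset ι), U.card = m →
    (∀ T ⊆ U, T.Nonempty → ∑ i ∈ T, g i ≠ 0) →
    ∀ i ∈ U, ∀ j ∈ U, g i ≠ g j →
    U.card + 2 ≤ (sums g U).card := by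
  intro m
  induction m using Nat.strong_induction_on with
  | _ m IH =>
  intro U hU hzsf i hi j hj hij
  have hij' : i ≠ j := fun h => hij (h ▸ rfl)
  have hpair : ({i, j} : Finset ι) ⊆ U := by
    intro a ha; rcases mem_insert.1 ha with rfl | ha
    · exact hi
    · rw [mem_singleton.1 ha]; exact hj
  have h2 : 2 ≤ U.card := by
    calc 2 = ({i, j} : Finset ι).card := (card_pair hij').symm
    _ ≤ U.card := card_le_card hpair
  rcases eq_or_lt_of_le h2 with heq | hlt
  · -- base case U = {i, j}
    have hUij : U = {i, j} := by
      symm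
      apply Finset.eq_of_subset_of_card_le hpair
      rw [card_pair hij']; exact heq.ge
    subst hUij
    have hgi : g i ≠ 0 := fun h => hzsf {i} (by simp) (singleton_nonempty i) (by simp [h])
    have hgj : g j ≠ 0 := fun h => hzsf {j} (by simp) (singleton_nonempty j) (by simp [h])
    have hgij : g i + g j ≠ 0 := fun h =>
      hzsf {i, j} le_rfl ⟨i, by simp⟩ (by rw [sum_pair hij']; exact h)
    have hsubs : ({0, g i, g j, g i + g j} : Finset G) ⊆ sums g {i, j} := by
      intro a ha
      simp only [mem_insert, mem_singleton] at ha
      rcases ha with rfl | rfl | rfl | rfl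
      · exact zero_mem_sums g _
      · exact mem_image.2 ⟨{i}, by simp, by simp⟩
      · exact mem_image.2 ⟨{j}, by simp, by simp⟩
      · exact mem_image.2 ⟨{i, j}, by simp, by rw [sum_pair hij']⟩
    have h0 : (0 : G) ∉ ({g i, g j, g i + g j} : Finset G) := by
      simp only [mem_insert, mem_singleton]
      push_neg
      exact ⟨fun h => hgi h.symm, fun h => hgj h.symm, fun h => hgij h.symm⟩
    have hgi' : g i ∉ ({g j, g i + g j} : Finset G) := by
      simp only [mem_insert, mem_singleton]
      push_neg
      exact ⟨hij, fun h => hgj (left_eq_add.1 h)⟩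
    have hgj' : g j ∉ ({g i + g j} : Finset G) := by
      simp only [mem_singleton]
      exact fun h => hgi (right_eq_add.1 h)
    have hc4 : ({0, g i, g j, g i + g j} : Finset G).card = 4 := by
      rw [card_insert_of_notMem h0, card_insert_of_notMem hgi',
        card_insert_of_notMem hgj', card_singleton]
    have := card_le_card hsubs
    rw [hc4] at this
    rw [card_pair hij']
    omega
  · -- inductive step
    obtain ⟨x, hxU, hxi, hxj⟩ : ∃ x ∈ U, x ≠ i ∧ x ≠ j := by
      by_contra hc
      push_neg at hc
      have hsub : U ⊆ {i, j} := by
        intro a ha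
        rcases eq_or_ne a i with rfl | h1
        · exact mem_insert_self _ _
        · rcases eq_or_ne a j with rfl | h2
          · exact mem_insert_of_mem (mem_singleton_self _)
          · exact absurd (hc a ha h1) h2
      have := card_le_card hsub
      rw [card_pair hij'] at this
      omega
    have hiU' : i ∈ U.erase x := mem_erase.2 ⟨fun h => hxi h.symm, hi⟩
    have hjU' : j ∈ U.erase x := mem_erase.2 ⟨fun h => hxj h.symm, hj⟩
    have hzsf' : ∀ T ⊆ U.erase x, T.Nonempty → ∑ i ∈ T, g i ≠ 0 :=
      fun T hT => hzsf T (hT.trans (erase_subset _ _))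
    have hcard' : (U.erase x).card = U.card - 1 := card_erase_of_mem hxU
    have hIH := IH (U.card - 1) (by omega) (U.erase x) hcard' hzsf' i hiU' j hjU' hij
    have hstep := sums_step g U x hxU hzsf
    omega

lemma natCastVal {n : ℕ} [NeZero n] (a : ZMod n) : ((a.val : ℕ) : ZMod n) = a :=
  ZMod.natCast_val a |>.trans (by simp)

lemma two_torsion_subsingleton {n : ℕ} [NeZero n] (a b : ZMod n)
    (ha : a + a = 0) (ha0 : a ≠ 0) (hb : b + b = 0) (hb0 : b ≠ 0) : a = b := by
  have key : ∀ c : ZMod n, c + c = 0 → c ≠ 0 → c.val + c.val = n := by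
    intro c hc hc0
    have h1 : ((c.val + c.val : ℕ) : ZMod n) = 0 := by
      push_cast [natCastVal]; exact hc
    have h2 : n ∣ c.val + c.val := (ZMod.natCast_eq_zero_iff _ n).1 h1
    have h3 : c.val < n := ZMod.val_lt c
    have h4 : c.val ≠ 0 := fun h => hc0 (by rw [← natCastVal c, h, Nat.cast_zero])
    obtain ⟨d, hd⟩ := h2
    have hcases : d = 0 ∨ d = 1 ∨ 2 ≤ d := by omega
    rcases hcases with rfl | rfl | hd2
    · omega
    · omega
    · have : n * 2 ≤ n * d := Nat.mul_le_mul_left n hd2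
      omega
  have := key a ha ha0
  have := key b hb hb0
  have hval : a.val = b.val := by omega
  rw [← natCastVal a, ← natCastVal b, hval]

/-- If `n ≥ 2` and there is a sequence of `n` elements of `ℤ/nℤ` with `MZ(S) = n - s`
and exactly `s + 1` distinct elements, then `s ∈ {0, 1, n-2, n-1}`. -/
theorem stmt_10 (n s : ℕ) (hn : 2 ≤ n) (hs : s ≤ n - 1)
    (hex : ∃ g : Fin n → ZMod n,
      IsLeast {m : ℕ | ∃ T : Finset (Fin n),
        T.Nonempty ∧ ∑ i ∈ T, g i = 0 ∧ T.card = m} (n - s) ∧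
      (Finset.univ.image g).card = s + 1) :
    s = 0 ∨ s = 1 ∨ s = n - 2 ∨ s = n - 1 := by
  by_contra hcon
  push_neg at hcon
  obtain ⟨hc0, hc1, hc2, hc3⟩ := hcon
  obtain ⟨g, ⟨hmemL, hlb⟩, himg⟩ := hex
  have hs2 : 2 ≤ s := by omega
  have hs3 : s + 3 ≤ n := by omega
  have F1 : ∀ T : Finset (Fin n), T.Nonempty → ∑ i ∈ T, g i = 0 → n - s ≤ T.card :=
    fun T hT hsum => hlb ⟨T, hT, hsum, rfl⟩
  by_cases hcase : n ≤ 2*s + 1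
  · -- many distinct values: find a pair x, -x
      have : NeZero n := ⟨by omega⟩
      set k := n - s with hk
      have hk3 : 3 ≤ k := by omega
      set D := Finset.univ.image g with hD
      have hg0 : ∀ i, g i ≠ 0 := by
        intro i h
        have := F1 {i} (singleton_nonempty i) (by simp [h])
        simp only [card_singleton] at this
        omega
      have hD0 : (0 : ZMod n) ∉ D := by
        intro h
        obtain ⟨i, _, hi⟩ := mem_image.1 h
        exact hg0 i hi
      have hpair : ∃ x ∈ D, -x ∈ D ∧ x ≠ -x := by
        by_contra hc
        push_neg at hc
        set negD := D.image (fun x => -x) with hnegD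
        have hcardneg : negD.card = s + 1 := by
          rw [hnegD, card_image_of_injective _ neg_injective, himg]
        have hsub : D ∪ negD ⊆ Finset.univ.erase 0 := by
          intro x hx
          rcases mem_union.1 hx with hx | hx
          · exact mem_erase.2 ⟨fun h => hD0 (h ▸ hx), mem_univ x⟩
          · obtain ⟨y, hy, rfl⟩ := mem_image.1 hx
            refine mem_erase.2 ⟨fun h => hD0 ?_, mem_univ _⟩
            · rw [neg_eq_zero] at h; exact h ▸ hy
        have hinter : (D ∩ negD).card ≤ 1 := by
          apply card_le_one.2
          intro a ha b hb
          have hfix : ∀ c ∈ D ∩ negD, c + c = 0 ∧ c ≠ 0 := by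
            intro c hcm
            have hc1 : c ∈ D := (mem_inter.1 hcm).1
            have hc2 : c ∈ negD := (mem_inter.1 hcm).2
            obtain ⟨y, hy, hy2⟩ := mem_image.1 hc2
            have : -c ∈ D := by rw [← hy2, neg_neg]; exact hy
            have heq := hc c hc1 this
            constructor
            · exact eq_neg_iff_add_eq_zero.1 heq
            · exact fun h => hD0 (h ▸ hc1)
          obtain ⟨ha1, ha2⟩ := hfix a ha
          obtain ⟨hb1, hb2⟩ := hfix b hb
          exact two_torsion_subsingleton a b ha1 ha2 hb1 hb2
        have hcu : (D ∪ negD).card ≤ n - 1 := by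
          refine le_trans (card_le_card hsub) ?_
          rw [card_erase_of_mem (mem_univ 0), card_univ]
          simp [ZMod.card]
        have := Finset.card_union_add_card_inter D negD
        rw [himg, hcardneg] at this
        omega
      obtain ⟨x, hx, hnx, hxne⟩ := hpair
      obtain ⟨i, _, hi⟩ := mem_image.1 hx
      obtain ⟨j, _, hj⟩ := mem_image.1 hnx
      have hij : i ≠ j := fun h => hxne (hi.symm.trans ((congrArg g h).trans hj))
      have := F1 {i, j} ⟨i, by simp⟩ (by rw [sum_pair hij, hi, hj, add_neg_cancel])
      rw [card_pair hij] at this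
      omega

  · push_neg at hcase
    have hhard : 2*s + 2 ≤ n := by omega
    by_cases ha : ∃ u : ZMod n, n - s ≤ (Finset.univ.filter (fun i => g i = u)).card
    · obtain ⟨u, hu⟩ := ha
      have : NeZero n := ⟨by omega⟩
      set k := n - s with hk
      have hks : s + 2 ≤ k := by omega
      have hkn : k + s = n := by omega
      set D := Finset.univ.image g with hD
      set F := Finset.univ.filter (fun i => g i = u) with hF
      have hg0 : ∀ i, g i ≠ 0 := by
        intro i h
        have := F1 {i} (singleton_nonempty i) (by simp [h])
        simp only [card_singleton] at this
        omega
      have hD0 : (0 : ZMod n) ∉ D := fun h => by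
        obtain ⟨i, _, hi⟩ := mem_image.1 h; exact hg0 i hi
      -- sums of subsets of the fiber
      have hsumF : ∀ A ⊆ F, ∑ i ∈ A, g i = (A.card : ZMod n) * u := by
        intro A hA
        rw [sum_congr rfl (fun i hi => (mem_filter.1 (hA hi)).2), sum_const, nsmul_eq_mul]
      have smallmul : ∀ m : ℕ, 1 ≤ m → m ≤ k - 1 → (m : ZMod n) * u ≠ 0 := by
        intro m h1 h2 heq
        obtain ⟨A, hA, hAcard⟩ := Finset.exists_subset_card_eq (show m ≤ F.card by omega)
        have h0 := F1 A (card_pos.1 (by omega)) (by rw [hsumF A hA, hAcard, heq])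
        omega
      -- u has a multiplicative inverse
      have hcop : Nat.Coprime u.val n := by
        rw [Nat.Coprime]
        by_contra hne
        set t := Nat.gcd u.val n with ht
        have htn : t ∣ n := Nat.gcd_dvd_right _ _
        have htu : t ∣ u.val := Nat.gcd_dvd_left _ _
        have ht0 : t ≠ 0 := fun h => by
          have := Nat.eq_zero_of_gcd_eq_zero_right h; omega
        have ht2 : 2 ≤ t := by omega
        have hm1 : 1 ≤ n / t := Nat.one_le_div_iff (by omega) |>.2 (Nat.le_of_dvd (by omega) htn)
        have hm2 : n / t ≤ n / 2 := Nat.div_le_div_left ht2 (by omega)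
        have hmz : ((n / t : ℕ) : ZMod n) * u = 0 := by
          rw [← natCastVal u, ← Nat.cast_mul, ZMod.natCast_eq_zero_iff]
          obtain ⟨c, hc⟩ := htu
          rw [hc, ← Nat.mul_assoc, Nat.div_mul_cancel htn]
          exact Dvd.intro c rfl
        exact smallmul (n / t) hm1 (by omega) hmz
      have hUnit : IsUnit u := by
        rw [← natCastVal u]; exact (ZMod.isUnit_iff_coprime u.val n).2 hcop
      obtain ⟨w, hw⟩ := hUnit
      -- the "discrete log" of each value
      have hlog : ∀ v : ZMod n, v = (((v * ↑w⁻¹).val : ℕ) : ZMod n) * u := by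
        intro v
        rw [natCastVal, ← hw, mul_assoc, Units.inv_mul, mul_one]
      -- constraint: each value other than u has log in [2, s+1]
      have hbound : ∀ v ∈ D, v ≠ u → 2 ≤ (v * ↑w⁻¹).val ∧ (v * ↑w⁻¹).val ≤ s + 1 := by
        intro v hv hvu
        set c := (v * ↑w⁻¹).val with hc
        have hvc : v = ((c : ℕ) : ZMod n) * u := hlog v
        have hc0 : c ≠ 0 := by
          intro h
          rw [h] at hvc
          simp at hvc
          exact hD0 (hvc ▸ hv)
        have hc1 : c ≠ 1 := by
          intro h
          rw [h] at hvc
          simp at hvc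
          exact hvu hvc
        have hclt : c < n := ZMod.val_lt _
        constructor
        · omega
        · by_contra hcbig
          push_neg at hcbig
          -- use m = n - c copies of u plus one copy of v
          set m := n - c with hm
          have hm1 : 1 ≤ m := by omega
          have hmk : m + 1 ≤ k - 1 := by omega
          obtain ⟨j, _, hj⟩ := mem_image.1 hv
          obtain ⟨A, hA, hAcard⟩ := Finset.exists_subset_card_eq (show m ≤ F.card by omega)
          have hjA : j ∉ A := by
            intro h
            have := (mem_filter.1 (hA h)).2
            rw [hj] at this
            exact hvu this
          have hsum : ∑ i ∈ insert j A, g i = 0 := by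
            rw [sum_insert hjA, hsumF A hA, hAcard, hj, hvc, ← add_mul, ← Nat.cast_add,
              (by omega : c + m = n), ZMod.natCast_self, zero_mul]
          have := F1 (insert j A) (insert_nonempty _ _) hsum
          rw [card_insert_of_notMem hjA, hAcard] at this
          omega
      -- the log map is injective on D.erase u with image in Icc 2 (s+1)
      set φ : ZMod n → ℕ := fun v => (v * ↑w⁻¹).val with hφ
      have hinj : Set.InjOn φ (D.erase u) := by
        intro a ha b hb hab
        have := congrArg (fun c : ℕ => ((c : ZMod n)) * u) hab
        simpa only [hφ, ← hlog] using this
      have himgsub : (D.erase u).image φ ⊆ Finset.Icc 2 (s+1) := by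
        intro c hcm
        obtain ⟨v, hv, rfl⟩ := mem_image.1 hcm
        obtain ⟨hvu, hvD⟩ := mem_erase.1 hv
        obtain ⟨h2c, hcs⟩ := hbound v hvD hvu
        exact mem_Icc.2 ⟨h2c, hcs⟩
      have huD : u ∈ D := by
        have : 0 < F.card := by omega
        obtain ⟨i, hi⟩ := card_pos.1 this
        exact mem_image.2 ⟨i, mem_univ i, (mem_filter.1 hi).2⟩
      have hcarderase : (D.erase u).card = s := by
        rw [card_erase_of_mem huD, himg]
        omega
      have himgeq : (D.erase u).image φ = Finset.Icc 2 (s+1) := by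
        apply eq_of_subset_of_card_le himgsub
        rw [card_image_of_injOn hinj, hcarderase, Nat.card_Icc]
        omega
      have hsmem : s ∈ (D.erase u).image φ := by
        rw [himgeq]; exact mem_Icc.2 ⟨by omega, by omega⟩
      have hs1mem : s + 1 ∈ (D.erase u).image φ := by
        rw [himgeq]; exact mem_Icc.2 ⟨by omega, by omega⟩
      obtain ⟨v1, hv1, hφv1⟩ := mem_image.1 hsmem
      obtain ⟨v2, hv2, hφv2⟩ := mem_image.1 hs1mem
      have hv1v2 : v1 ≠ v2 := fun h => by rw [h, hφv2] at hφv1; omega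
      -- final zero-sum of size k - s + 1
      obtain ⟨j1, _, hj1⟩ := mem_image.1 (mem_erase.1 hv1).2
      obtain ⟨j2, _, hj2⟩ := mem_image.1 (mem_erase.1 hv2).2
      have hj12 : j1 ≠ j2 := fun h => hv1v2 (by rw [← hj1, h, hj2])
      obtain ⟨A, hA, hAcard⟩ := Finset.exists_subset_card_eq (show k - s - 1 ≤ F.card by omega)
      have hj1A : j1 ∉ A := fun h => (mem_erase.1 hv1).1 (by rw [← hj1, (mem_filter.1 (hA h)).2])
      have hj2A : j2 ∉ A := fun h => (mem_erase.1 hv2).1 (by rw [← hj2, (mem_filter.1 (hA h)).2])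
      set T := insert j1 (insert j2 A) with hT
      have hcardT : T.card = k - s + 1 := by
        rw [hT, card_insert_of_notMem (by simp [hj12, hj1A]), card_insert_of_notMem hj2A, hAcard]
        omega
      have hsumT : ∑ i ∈ T, g i = 0 := by
        simp only [hφ] at hφv1 hφv2
        rw [hT, sum_insert (by simp [hj12, hj1A]), sum_insert hj2A, hsumF A hA, hAcard,
          hj1, hj2, hlog v1, hlog v2, hφv1, hφv2, ← add_mul, ← add_mul, ← Nat.cast_add,
          ← Nat.cast_add, (by omega : s + (s + 1 + (k - s - 1)) = n), ZMod.natCast_self, zero_mul]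
      have := F1 T ⟨j1, by simp [hT]⟩ hsumT
      omega

    · push_neg at ha
      have : NeZero n := ⟨by omega⟩
      set k := n - s with hk
      have hks : s + 2 ≤ k := by omega
      have hkn : k + s = n := by omega
      have hk3 : 3 ≤ k := by omega
      set D := Finset.univ.image g with hD
      have hg0 : ∀ i, g i ≠ 0 := by
        intro i h
        have := F1 {i} (singleton_nonempty i) (by simp [h])
        simp only [card_singleton] at this
        omega
      -- representative choice
      have hex : ∀ v ∈ D, ∃ i : Fin n, g i = v := by
        intro v hv
        obtain ⟨i, _, hi⟩ := mem_image.1 hv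
        exact ⟨i, hi⟩
      set f : ZMod n → Fin n := fun v => if h : ∃ i, g i = v then h.choose else ⟨0, by omega⟩
        with hf
      have hgf : ∀ v ∈ D, g (f v) = v := by
        intro v hv
        have h' : ∃ i, g i = v := hex v hv
        simp only [hf, dif_pos h']
        exact h'.choose_spec
      set R := D.image f with hR
      have hinjf : Set.InjOn f D := by
        intro a ha' b hb' hab
        rw [← hgf a ha', ← hgf b hb', hab]
      have hcardR : R.card = s + 1 := by rw [hR, card_image_of_injOn hinjf, himg]
      set C := Finset.univ \ R with hC
      have hcardC : C.card = k - 1 := by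
        rw [hC, card_sdiff_of_subset (subset_univ R), hcardR, card_univ, Fintype.card_fin]
        omega
      -- C has at least two values in its image
      have h2C : 2 ≤ (C.image g).card := by
        by_contra hle
        push_neg at hle
        have hCne : C.Nonempty := card_pos.1 (by omega)
        obtain ⟨i0, hi0⟩ := hCne
        have hall : ∀ i ∈ C, g i = g i0 := by
          intro i hi
          have h1 : g i ∈ C.image g := mem_image_of_mem g hi
          have h2 : g i0 ∈ C.image g := mem_image_of_mem g hi0
          exact card_le_one.1 (by omega) _ h1 _ h2
        have hu : g i0 ∈ D := mem_image.2 ⟨i0, mem_univ _, rfl⟩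
        have hfu : f (g i0) ∉ C := by
          rw [hC]
          simp only [mem_sdiff, mem_univ, true_and, not_not]
          exact mem_image_of_mem f hu
        have hsubfib : insert (f (g i0)) C ⊆ Finset.univ.filter (fun i => g i = g i0) := by
          intro i hi
          rcases mem_insert.1 hi with rfl | hi
          · exact mem_filter.2 ⟨mem_univ _, hgf _ hu⟩
          · exact mem_filter.2 ⟨mem_univ _, hall i hi⟩
        have := card_le_card hsubfib
        rw [card_insert_of_notMem hfu, hcardC] at this
        have := ha (g i0)
        omega
      -- choose e ∈ C such that C.erase e still has ≥ 2 values
      have hechoice : ∃ e ∈ C, 2 ≤ ((C.erase e).image g).card := by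
        rcases lt_or_ge ((C.image g).card) 3 with h3 | h3
        · -- exactly two values: pick a duplicated index
          have hlt : (C.image g).card < C.card := by omega
          obtain ⟨i, hi, i', hi', hii', hgii'⟩ :=
            Finset.exists_ne_map_eq_of_card_lt_of_maps_to hlt (fun a ha' => mem_image_of_mem g ha')
          refine ⟨i, hi, ?_⟩
          have hsub : C.image g ⊆ (C.erase i).image g := by
            intro v hv
            obtain ⟨j, hj, rfl⟩ := mem_image.1 hv
            rcases eq_or_ne j i with rfl | hji
            · exact mem_image.2 ⟨i', mem_erase.2 ⟨fun h => hii' h.symm, hi'⟩, hgii'.symm⟩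
            · exact mem_image.2 ⟨j, mem_erase.2 ⟨hji, hj⟩, rfl⟩
          calc 2 ≤ (C.image g).card := h2C
          _ ≤ ((C.erase i).image g).card := card_le_card hsub
        · -- at least 3 values: remove any element
          have hCne : C.Nonempty := card_pos.1 (by omega)
          obtain ⟨e, he⟩ := hCne
          refine ⟨e, he, ?_⟩
          have hsub : C.image g ⊆ insert (g e) ((C.erase e).image g) := by
            intro v hv
            obtain ⟨j, hj, rfl⟩ := mem_image.1 hv
            rcases eq_or_ne j e with rfl | hje
            · exact mem_insert_self _ _
            · exact mem_insert_of_mem (mem_image.2 ⟨j, mem_erase.2 ⟨hje, hj⟩, rfl⟩)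
          have := card_le_card hsub
          have := card_insert_le (g e) ((C.erase e).image g)
          omega
      obtain ⟨e, heC, h2U⟩ := hechoice
      set U := C.erase e with hU
      have hcardU : U.card = k - 2 := by
        rw [hU, card_erase_of_mem heC, hcardC]
        omega
      have hzsfU : ∀ T ⊆ U, T.Nonempty → ∑ i ∈ T, g i ≠ 0 := by
        intro T hT hTne hsum
        have := F1 T hTne hsum
        have := card_le_card hT
        omega
      -- two indices in U with distinct values
      obtain ⟨a, haU, b, hbU, hab⟩ : ∃ a ∈ U, ∃ b ∈ U, g a ≠ g b := by
        obtain ⟨va, hva, vb, hvb, hvab⟩ := Finset.one_lt_card.1 h2U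
        obtain ⟨a, haU, rfl⟩ := mem_image.1 hva
        obtain ⟨b, hbU, rfl⟩ := mem_image.1 hvb
        exact ⟨a, haU, b, hbU, hvab⟩
      have holson := olson g U.card U rfl hzsfU a haU b hbU hab
      rw [hcardU] at holson
      -- pigeonhole between sums and negated values of R
      set SS := (sums g U).erase 0 with hSS
      have hcardSS : k - 1 ≤ SS.card := by
        rw [hSS, card_erase_of_mem (zero_mem_sums g U)]
        omega
      set W := R.image (fun i => - g i) with hW
      have hWD : W = D.image (fun v => -v) := by
        rw [hW, hR, image_image]
        apply image_congr
        intro v hv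
        simp only [Function.comp_apply]
        rw [hgf v hv]
      have hcardW : W.card = s + 1 := by
        rw [hWD, card_image_of_injective _ neg_injective, himg]
      have hsubU : SS ∪ W ⊆ Finset.univ.erase 0 := by
        intro x hx
        rcases mem_union.1 hx with hx | hx
        · exact mem_erase.2 ⟨(mem_erase.1 hx).1, mem_univ _⟩
        · obtain ⟨i, _, rfl⟩ := mem_image.1 hx
          exact mem_erase.2 ⟨fun h => hg0 i (neg_eq_zero.1 h), mem_univ _⟩
      have hcarduniv : (Finset.univ.erase (0 : ZMod n)).card = n - 1 := by
        rw [card_erase_of_mem (mem_univ 0), card_univ]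
        simp [ZMod.card]
      have hinterpos : 0 < (SS ∩ W).card := by
        have h1 := card_le_card hsubU
        have h2 := Finset.card_union_add_card_inter SS W
        omega
      obtain ⟨x, hx⟩ := card_pos.1 hinterpos
      have hxSS : x ∈ SS := (mem_inter.1 hx).1
      have hxW : x ∈ W := (mem_inter.1 hx).2
      obtain ⟨i0, hi0R, hi0⟩ := mem_image.1 hxW
      obtain ⟨T, hTpow, hTsum⟩ := mem_image.1 (mem_of_mem_erase hxSS)
      have hTU : T ⊆ U := mem_powerset.1 hTpow
      have hTne : T.Nonempty := by
        rcases T.eq_empty_or_nonempty with rfl | h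
        · exfalso
          rw [sum_empty] at hTsum
          exact (mem_erase.1 hxSS).1 hTsum.symm
        · exact h
      have hi0T : i0 ∉ T := by
        intro h
        have h1 : i0 ∈ C := mem_of_mem_erase (hTU h)
        rw [hC] at h1
        exact (mem_sdiff.1 h1).2 hi0R
      have hsum0 : ∑ i ∈ insert i0 T, g i = 0 := by
        rw [sum_insert hi0T, hTsum, ← hi0, add_neg_cancel]
      have hF1 := F1 (insert i0 T) (insert_nonempty _ _) hsum0
      have hTcard : T.card ≤ k - 2 := by
        have := card_le_card hTU
        omega
      rw [card_insert_of_notMem hi0T] at hF1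
      omega
end
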